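/- arXiv:2510.03537 — 3 statements merged into one kernel-verified Lean document; each statement's English description precedes it below -/
import Mathlib

section
/- Let P be an m×m row-stochastic matrix that is irreducible and aperiodic, and let π be a stationary distribution of P. Suppose the eigenvalues λ_1, …, λ_m of P (the roots of its characteristic polynomial over ℂ) are all nonzero and pairwise distinct, with λ_1 = 1, and set ρ = max_{2 ≤ k ≤ m} |λ_k|. Then for all indices i, j and all n ≥ 1, |(P^n)_{ij} − π_j| ≤ Φ · ρ^n, where Φ = ∑_{k=2}^m |∑_{l=1}^m (-1)^{m-l} e_{m-l}(λ_1, …, λ̂_k, …, λ_m) · (P^l)_{ij}| / (|λ_k| · ∏_{t≠k} |λ_k − λ_t|). -/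
open Finset Polynomial

/-- An `m × m` real matrix with nonnegative entries whose rows each sum to 1. -/
def IsRowStochastic {m : ℕ} (P : Matrix (Fin m) (Fin m) ℝ) : Prop :=
  (∀ i j, 0 ≤ P i j) ∧ ∀ i, ∑ j, P i j = 1

/-- Irreducibility of a Markov transition matrix. -/
def IsIrreducibleMC {m : ℕ} (P : Matrix (Fin m) (Fin m) ℝ) : Prop :=
  ∀ i j, ∃ n : ℕ, 1 ≤ n ∧ 0 < (P ^ n) i j

/-- Aperiodicity of a Markov transition matrix: for each state `i`, the gcd of
`{n ≥ 1 : (P^n)_{ii} > 0}` is `1`, i.e. every common divisor of that set equals `1`. -/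
def IsAperiodicMC {m : ℕ} (P : Matrix (Fin m) (Fin m) ℝ) : Prop :=
  ∀ i, ∀ d : ℕ, (∀ n : ℕ, 1 ≤ n → 0 < (P ^ n) i i → d ∣ n) → d = 1

/-- A stationary distribution of `P`. -/
def IsStationaryMC {m : ℕ} (P : Matrix (Fin m) (Fin m) ℝ) (pi : Fin m → ℝ) : Prop :=
  (∀ j, 0 ≤ pi j) ∧ (∑ j, pi j = 1) ∧ ∀ j, ∑ i, pi i * P i j = pi j

/-- The `r`-th elementary symmetric polynomial of `lam 1, …, lam m` with `lam k` omitted. -/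
noncomputable def esymmOmit {m : ℕ} (lam : Fin m → ℂ) (k : Fin m) (r : ℕ) : ℂ :=
  ∑ s ∈ Finset.powersetCard r (Finset.univ.erase k), ∏ t ∈ s, lam t

section Aux

variable {m : ℕ}

lemma aux_pow_mulVec (A : Matrix (Fin m) (Fin m) ℂ) (v : Fin m → ℂ) (μ : ℂ)
    (hv : A.mulVec v = μ • v) : ∀ n : ℕ, (A ^ n).mulVec v = μ ^ n • v := by
  intro n
  induction n with
  | zero => simp
  | succ n ih =>
    rw [pow_succ', ← Matrix.mulVec_mulVec, ih, Matrix.mulVec_smul, hv, smul_smul, ← pow_succ]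

lemma aux_aeval_mulVec (A : Matrix (Fin m) (Fin m) ℂ) (v : Fin m → ℂ) (μ : ℂ)
    (hv : A.mulVec v = μ • v) (p : ℂ[X]) : (aeval A p).mulVec v = p.eval μ • v := by
  induction p using Polynomial.induction_on' with
  | add p q hp hq => rw [map_add, Matrix.add_mulVec, hp, hq, eval_add, add_smul]
  | monomial n c =>
    have h1 : (aeval A ((monomial n) c)) = c • A ^ n := by
      rw [aeval_monomial, ← Algebra.smul_def]
    rw [h1, Matrix.smul_mulVec, aux_pow_mulVec A v μ hv, eval_monomial, smul_smul]

lemma aux_vecMul_matsmul (M : Matrix (Fin m) (Fin m) ℂ) (c : ℂ) (v : Fin m → ℂ) :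
    Matrix.vecMul v (c • M) = c • (Matrix.vecMul v M) := by
  ext b
  simp only [Matrix.vecMul, dotProduct, Matrix.smul_apply, Pi.smul_apply, smul_eq_mul,
    Finset.mul_sum]
  exact Finset.sum_congr rfl fun t _ => by ring

lemma aux_pow_vecMul (A : Matrix (Fin m) (Fin m) ℂ) (v : Fin m → ℂ) (μ : ℂ)
    (hv : Matrix.vecMul v A = μ • v) : ∀ n : ℕ, Matrix.vecMul v (A ^ n) = μ ^ n • v := by
  intro n
  induction n with
  | zero => simp
  | succ n ih =>
    rw [pow_succ, ← Matrix.vecMul_vecMul, ih, Matrix.smul_vecMul, hv, smul_smul, ← pow_succ]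

lemma aux_aeval_vecMul (A : Matrix (Fin m) (Fin m) ℂ) (v : Fin m → ℂ) (μ : ℂ)
    (hv : Matrix.vecMul v A = μ • v) (p : ℂ[X]) : Matrix.vecMul v (aeval A p) = p.eval μ • v := by
  induction p using Polynomial.induction_on' with
  | add p q hp hq => rw [map_add, Matrix.vecMul_add, hp, hq, eval_add, add_smul]
  | monomial n c =>
    have h1 : (aeval A ((monomial n) c)) = c • A ^ n := by
      rw [aeval_monomial, ← Algebra.smul_def]
    rw [h1, aux_vecMul_matsmul, aux_pow_vecMul A v μ hv, eval_monomial, smul_smul]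

lemma aux_lagrange (hm : 0 < m) (lam : Fin m → ℂ) (hinj : Function.Injective lam) :
    (1 : ℂ[X]) = ∑ k, C ((∏ t ∈ Finset.univ.erase k, (lam k - lam t))⁻¹) *
      ∏ t ∈ Finset.univ.erase k, (X - C (lam t)) := by
  have : Nonempty (Fin m) := ⟨⟨0, hm⟩⟩
  rw [← Lagrange.sum_basis (Set.injOn_of_injective hinj) Finset.univ_nonempty]
  refine Finset.sum_congr rfl fun k _ => ?_
  unfold Lagrange.basis Lagrange.basisDivisor
  rw [Finset.prod_mul_distrib, ← map_prod, Finset.prod_inv_distrib]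

lemma aux_coeff (lam : Fin m → ℂ) (k : Fin m) (l : ℕ) (hl : l < m) :
    (∏ t ∈ Finset.univ.erase k, (X - C (lam t))).coeff l =
      (-1) ^ (m - 1 - l) * esymmOmit lam k (m - 1 - l) := by
  have hcard : Multiset.card (((Finset.univ.erase k).val.map lam)) = m - 1 := by
    rw [Multiset.card_map]
    show (Finset.univ.erase k).card = m - 1
    rw [Finset.card_erase_of_mem (Finset.mem_univ k), Finset.card_univ, Fintype.card_fin]
  have hle : l ≤ Multiset.card (((Finset.univ.erase k).val.map lam)) := by
    rw [hcard]; omega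
  have h := Multiset.prod_X_sub_C_coeff ((Finset.univ.erase k).val.map lam) hle
  rw [hcard] at h
  have heq : (∏ t ∈ Finset.univ.erase k, (X - C (lam t))) =
      (((Finset.univ.erase k).val.map lam).map (fun t => X - C t)).prod := by
    rw [Multiset.map_map]; rfl
  rw [heq, h, Finset.esymm_map_val]
  rfl

lemma aux_eval_charpoly (A : Matrix (Fin m) (Fin m) ℂ) (μ : ℂ) :
    A.charpoly.eval μ = (μ • (1 : Matrix (Fin m) (Fin m) ℂ) - A).det := by
  rw [Matrix.charpoly, ← Polynomial.coe_evalRingHom, RingHom.map_det]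
  congr 1
  ext a b
  by_cases h : a = b
  · subst h
    simp [Matrix.charmatrix_apply_eq, Matrix.one_apply]
  · simp [Matrix.charmatrix_apply_ne _ _ _ h, Matrix.one_apply, h]

lemma aux_eigenvector (A : Matrix (Fin m) (Fin m) ℂ) (lam : Fin m → ℂ)
    (hchar : A.charpoly = ∏ k : Fin m, (X - C (lam k))) (k : Fin m) :
    ∃ v : Fin m → ℂ, v ≠ 0 ∧ A.mulVec v = lam k • v := by
  have hdet : (lam k • (1 : Matrix (Fin m) (Fin m) ℂ) - A).det = 0 := by
    rw [← aux_eval_charpoly, hchar, eval_prod]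
    exact Finset.prod_eq_zero (Finset.mem_univ k) (by simp)
  obtain ⟨v, hv0, hv⟩ := Matrix.exists_mulVec_eq_zero_iff.mpr hdet
  refine ⟨v, hv0, ?_⟩
  rw [Matrix.sub_mulVec, sub_eq_zero, Matrix.smul_mulVec, Matrix.one_mulVec] at hv
  exact hv.symm

end Aux

/-- Convergence theorem for Markov chains with a spectral error term. -/
theorem stmt_5 {m : ℕ} (hm : 0 < m) (P : Matrix (Fin m) (Fin m) ℝ)
    (hP : IsRowStochastic P) (hirr : IsIrreducibleMC P) (hap : IsAperiodicMC P)
    (pi : Fin m → ℝ) (hpi : IsStationaryMC P pi)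
    (lam : Fin m → ℂ)
    (hchar : (P.map ((↑) : ℝ → ℂ)).charpoly = ∏ k : Fin m, (X - C (lam k)))
    (hinj : Function.Injective lam) (hnz : ∀ k, lam k ≠ 0)
    (h1 : lam ⟨0, hm⟩ = 1)
    (ρ : ℝ)
    (hρ : IsGreatest {r : ℝ | ∃ k : Fin m, k ≠ ⟨0, hm⟩ ∧ ‖lam k‖ = r} ρ) :
    ∀ i j : Fin m, ∀ n : ℕ, 1 ≤ n →
      |(P ^ n) i j - pi j| ≤
        (∑ k ∈ Finset.univ.erase (⟨0, hm⟩ : Fin m),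
          ‖∑ l : Fin m, (-1 : ℂ) ^ (m - 1 - (l : ℕ)) *
              esymmOmit lam k (m - 1 - (l : ℕ)) * ((P ^ ((l : ℕ) + 1)) i j : ℂ)‖ /
            (‖lam k‖ *
              ∏ t ∈ Finset.univ.erase k, ‖lam k - lam t‖)) * ρ ^ n := by
  classical
  intro i j n hn
  set k0 : Fin m := ⟨0, hm⟩ with hk0def
  set A : Matrix (Fin m) (Fin m) ℂ := P.map ((↑) : ℝ → ℂ) with hAdef
  set q : Fin m → ℂ[X] := fun k => ∏ t ∈ Finset.univ.erase k, (X - C (lam t)) with hqdef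
  set d : Fin m → ℂ := fun k => ∏ t ∈ Finset.univ.erase k, (lam k - lam t) with hddef
  set N : Fin m → Matrix (Fin m) (Fin m) ℂ := fun k => aeval A (q k) with hNdef
  set pc : Fin m → ℂ := fun a => ((pi a : ℝ) : ℂ) with hpcdef
  set u : Fin m → ℂ := fun _ => (1 : ℂ) with hudef
  -- basic facts
  have hdne : ∀ k, d k ≠ 0 := by
    intro k
    rw [hddef]
    refine Finset.prod_ne_zero_iff.mpr fun t ht => sub_ne_zero.mpr fun h => ?_
    exact (Finset.mem_erase.mp ht).1 (hinj h).symm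
  have hqeval : ∀ k x, (q k).eval x = ∏ t ∈ Finset.univ.erase k, (x - lam t) := by
    intro k x; rw [hqdef]; simp [eval_prod]
  have hqk : ∀ k, (q k).eval (lam k) = d k := by intro k; rw [hqeval, hddef]
  have hqt : ∀ k t, t ≠ k → (q k).eval (lam t) = 0 := by
    intro k t hne
    rw [hqeval]
    exact Finset.prod_eq_zero (Finset.mem_erase.mpr ⟨hne, Finset.mem_univ t⟩) (sub_self _)
  have hq1 : ∀ k, k ≠ k0 → (q k).eval 1 = 0 := by
    intro k hk
    have := hqt k k0 (Ne.symm hk)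
    rwa [h1] at this
  have hq1k0 : (q k0).eval 1 = d k0 := by rw [← h1]; exact hqk k0
  have hmap : ∀ (r : ℕ) (a b : Fin m), ((P ^ r) a b : ℂ) = (A ^ r) a b := by
    intro r
    induction r with
    | zero => intro a b; simp [Matrix.one_apply, apply_ite ((↑) : ℝ → ℂ)]
    | succ r ih =>
      intro a b
      rw [pow_succ, pow_succ, Matrix.mul_apply, Matrix.mul_apply]
      push_cast
      refine Finset.sum_congr rfl fun t _ => ?_
      rw [ih a t, hAdef]
      simp [Matrix.map_apply]
  -- eigen-equation for N k
  have hAN : ∀ k, A * N k = lam k • N k := by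
    intro k
    have hfac : A.charpoly = (X - C (lam k)) * q k := by
      rw [hchar, hqdef, ← Finset.mul_prod_erase _ _ (Finset.mem_univ k)]
    have hch := Matrix.aeval_self_charpoly A
    rw [hfac, map_mul, map_sub, aeval_X, aeval_C, sub_mul, sub_eq_zero, ← Algebra.smul_def] at hch
    exact hch
  have hANpow : ∀ (r : ℕ) (k), A ^ r * N k = (lam k ^ r) • N k := by
    intro r k
    induction r with
    | zero => simp
    | succ r ih => rw [pow_succ', mul_assoc, ih, mul_smul_comm, hAN, smul_smul, ← pow_succ]
  -- Lagrange resolution of identity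
  have hone : (1 : Matrix (Fin m) (Fin m) ℂ) = ∑ k, (d k)⁻¹ • N k := by
    have hp := congrArg (aeval A) (aux_lagrange hm lam hinj)
    rw [map_one, map_sum] at hp
    calc (1 : Matrix (Fin m) (Fin m) ℂ)
        = ∑ k, aeval A (C ((∏ t ∈ Finset.univ.erase k, (lam k - lam t))⁻¹) *
            ∏ t ∈ Finset.univ.erase k, (X - C (lam t))) := hp
      _ = ∑ k, (d k)⁻¹ • N k := by
          refine Finset.sum_congr rfl fun k _ => ?_
          rw [map_mul, aeval_C, ← Algebra.smul_def, hNdef, hddef]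
  have hspec : ∀ (r : ℕ) (a b : Fin m),
      (A ^ r) a b = ∑ k, lam k ^ r * ((d k)⁻¹ * N k a b) := by
    intro r a b
    have hMr : A ^ r = ∑ k, (lam k ^ r * (d k)⁻¹) • N k := by
      calc A ^ r = A ^ r * 1 := (mul_one _).symm
        _ = ∑ k, (d k)⁻¹ • (A ^ r * N k) := by
            rw [hone, Finset.mul_sum]
            exact Finset.sum_congr rfl fun k _ => (mul_smul_comm _ _ _)
        _ = ∑ k, (lam k ^ r * (d k)⁻¹) • N k := by
            refine Finset.sum_congr rfl fun k _ => ?_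
            rw [hANpow, smul_smul, mul_comm]
    rw [hMr]
    simp [Matrix.sum_apply, mul_assoc]
  -- eigenvectors and basis
  obtain ⟨w, hw⟩ : ∃ w : Fin m → (Fin m → ℂ), ∀ k, w k ≠ 0 ∧ A.mulVec (w k) = lam k • w k := by
    choose w h1w h2w using fun k => aux_eigenvector A lam hchar k
    exact ⟨w, fun k => ⟨h1w k, h2w k⟩⟩
  set v : Fin m → (Fin m → ℂ) := Function.update w k0 u with hvdef
  have hu0 : u ≠ 0 := by
    intro h
    have := congrFun h k0
    rw [hudef] at this
    simp at this
  have huA : A.mulVec u = (1 : ℂ) • u := by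
    ext a
    rw [hudef]
    simp only [Matrix.mulVec, dotProduct, one_smul]
    rw [hAdef]
    simp only [Matrix.map_apply]
    rw [show ∑ t, ((P a t : ℂ) * 1) = ((∑ t, P a t : ℝ) : ℂ) by push_cast; simp]
    rw [hP.2 a]
    norm_num
  have hv : ∀ k, v k ≠ 0 ∧ A.mulVec (v k) = lam k • v k := by
    intro k
    by_cases hk : k = k0
    · subst hk
      rw [hvdef, Function.update_self]
      exact ⟨hu0, by rw [huA, h1]⟩
    · rw [hvdef, Function.update_of_ne hk]
      exact hw k
  have hNv : ∀ k l, (N l).mulVec (v k) = ((q l).eval (lam k)) • v k := by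
    intro k l
    rw [hNdef]
    exact aux_aeval_mulVec A (v k) (lam k) (hv k).2 (q l)
  have hli : LinearIndependent ℂ v := by
    rw [Fintype.linearIndependent_iff]
    intro g hg l
    have h0 : (N l).mulVec (∑ k, g k • v k) = 0 := by rw [hg, Matrix.mulVec_zero]
    have h2 : (N l).mulVec (∑ k, g k • v k) = ∑ k, g k • (((q l).eval (lam k)) • v k) := by
      rw [show (N l).mulVec (∑ k, g k • v k) = (N l).mulVecLin (∑ k, g k • v k) from rfl,
        map_sum]
      refine Finset.sum_congr rfl fun k _ => ?_
      rw [map_smul, Matrix.mulVecLin_apply, hNv]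
    rw [h2, Finset.sum_eq_single l
      (fun k _ hk => by rw [hqt l k hk, zero_smul, smul_zero])
      (fun h => absurd (Finset.mem_univ l) h)] at h0
    rw [hqk] at h0
    rcases smul_eq_zero.mp h0 with h | h
    · exact h
    · rcases smul_eq_zero.mp h with h' | h'
      · exact absurd h' (hdne l)
      · exact absurd h' (hv l).1
  haveI : Nonempty (Fin m) := ⟨k0⟩
  set B : Module.Basis (Fin m) ℂ (Fin m → ℂ) :=
    basisOfLinearIndependentOfCardEqFinrank hli (by simp) with hBdef
  have hBcoe : ∀ k, B k = v k := by
    intro k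
    rw [hBdef, coe_basisOfLinearIndependentOfCardEqFinrank]
  -- stationary vector
  have hpA : Matrix.vecMul pc A = pc := by
    ext b
    rw [hpcdef]
    simp only [Matrix.vecMul, dotProduct]
    rw [hAdef]
    simp only [Matrix.map_apply]
    rw [show ∑ a, ((pi a : ℂ) * (P a b : ℂ)) = ((∑ a, pi a * P a b : ℝ) : ℂ) by push_cast; rfl]
    rw [hpi.2.2 b]
  have hpsum : ∑ a, pc a = 1 := by
    rw [hpcdef]
    rw [show ∑ a, ((pi a : ℝ) : ℂ) = ((∑ a, pi a : ℝ) : ℂ) by push_cast; rfl, hpi.2.1]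
    norm_num
  -- the key entry formula for N k0
  have hNk0 : ∀ (b a : Fin m), N k0 a b = d k0 * pc b := by
    intro b
    -- column b of N k0 is a 1-eigenvector of A
    set col : Fin m → ℂ := fun a' => N k0 a' b with hcoldef
    have hcol : A.mulVec col = (1 : ℂ) • col := by
      ext a'
      have h2 : (A.mulVec col) a' = (A * N k0) a' b := by
        rw [hcoldef]
        simp [Matrix.mulVec, dotProduct, Matrix.mul_apply]
      rw [h2, hAN k0, h1, one_smul, one_smul, hcoldef]
    have hNcol : ∀ l, (N l).mulVec col = ((q l).eval 1) • col := by
      intro l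
      rw [hNdef]
      exact aux_aeval_mulVec A col 1 hcol (q l)
    have hz : ∀ l, l ≠ k0 → B.repr col l = 0 := by
      intro l hl
      have h0 : (N l).mulVec col = 0 := by rw [hNcol, hq1 l hl, zero_smul]
      have hrepr := B.sum_repr col
      have h2 : (N l).mulVec col = ∑ k, (B.repr col k) • (((q l).eval (lam k)) • v k) := by
        conv_lhs => rw [← hrepr]
        rw [show (N l).mulVec (∑ k, (B.repr col k) • B k)
            = (N l).mulVecLin (∑ k, (B.repr col k) • B k) from rfl, map_sum]
        refine Finset.sum_congr rfl fun k _ => ?_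
        rw [map_smul, Matrix.mulVecLin_apply, hBcoe, hNv]
      rw [h2, Finset.sum_eq_single l
        (fun k _ hk => by rw [hqt l k hk, zero_smul, smul_zero])
        (fun h => absurd (Finset.mem_univ l) h), hqk] at h0
      rcases smul_eq_zero.mp h0 with h | h
      · exact h
      · rcases smul_eq_zero.mp h with h' | h'
        · exact absurd h' (hdne l)
        · exact absurd h' (hv l).1
    have hconst : ∀ a, col a = B.repr col k0 := by
      intro a
      have hrepr := B.sum_repr col
      rw [Finset.sum_eq_single k0 (fun k _ hk => by rw [hz k hk, zero_smul])
        (fun h => absurd (Finset.mem_univ k0) h)] at hrepr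
      have := congrFun hrepr a
      rw [hBcoe] at this
      rw [← this]
      rw [hvdef, Function.update_self, hudef]
      simp
    -- now use the stationary vector
    have hpN : Matrix.vecMul pc (N k0) = d k0 • pc := by
      rw [hNdef]
      have := aux_aeval_vecMul A pc 1 (by rw [hpA, one_smul]) (q k0)
      rwa [hq1k0] at this
    have hentry := congrFun hpN b
    simp only [Matrix.vecMul, dotProduct, Pi.smul_apply, smul_eq_mul] at hentry
    have hsum : ∑ a, pc a * N k0 a b = B.repr col k0 := by
      calc ∑ a, pc a * N k0 a b = ∑ a, pc a * B.repr col k0 := by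
            refine Finset.sum_congr rfl fun a _ => ?_
            rw [show N k0 a b = col a from rfl, hconst a]
        _ = (∑ a, pc a) * B.repr col k0 := by rw [Finset.sum_mul]
        _ = B.repr col k0 := by rw [hpsum, one_mul]
    intro a
    rw [show N k0 a b = col a from rfl, hconst a, ← hsum, hentry]
  -- the numerator identity
  have hnum : ∀ k, (∑ l : Fin m, (-1 : ℂ) ^ (m - 1 - (l : ℕ)) *
      esymmOmit lam k (m - 1 - (l : ℕ)) * ((P ^ ((l : ℕ) + 1)) i j : ℂ))
      = lam k * N k i j := by
    intro k
    have hcard' : (Finset.univ.erase k).card = m - 1 := by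
      rw [Finset.card_erase_of_mem (Finset.mem_univ k), Finset.card_univ, Fintype.card_fin]
    have hdeg : (q k).natDegree < m := by
      have h' : (q k).natDegree ≤ ∑ t ∈ Finset.univ.erase k, (X - C (lam t)).natDegree := by
        rw [hqdef]
        exact Polynomial.natDegree_prod_le _ _
      have h'' : (∑ t ∈ Finset.univ.erase k, (X - C (lam t)).natDegree) = m - 1 := by
        simp only [natDegree_X_sub_C]
        rw [Finset.sum_const, smul_eq_mul, mul_one, hcard']
      omega
    have hNsum : N k = ∑ l ∈ Finset.range m, (q k).coeff l • A ^ l := by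
      rw [hNdef]
      exact aeval_eq_sum_range' hdeg A
    have hANk : (A * N k) i j = ∑ l ∈ Finset.range m, (q k).coeff l * (A ^ (l + 1)) i j := by
      rw [hNsum, Finset.mul_sum]
      rw [show (∑ l ∈ Finset.range m, A * ((q k).coeff l • A ^ l)) i j
          = ∑ l ∈ Finset.range m, (A * ((q k).coeff l • A ^ l)) i j from Matrix.sum_apply _ _ _ _]
      refine Finset.sum_congr rfl fun l _ => ?_
      rw [mul_smul_comm, ← pow_succ']
      simp
    calc (∑ l : Fin m, (-1 : ℂ) ^ (m - 1 - (l : ℕ)) *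
          esymmOmit lam k (m - 1 - (l : ℕ)) * ((P ^ ((l : ℕ) + 1)) i j : ℂ))
        = ∑ l : Fin m, (q k).coeff (l : ℕ) * (A ^ ((l : ℕ) + 1)) i j := by
          refine Finset.sum_congr rfl fun l _ => ?_
          rw [hmap, hqdef, aux_coeff lam k (l : ℕ) l.isLt]
      _ = ∑ l ∈ Finset.range m, (q k).coeff l * (A ^ (l + 1)) i j :=
          Fin.sum_univ_eq_sum_range (fun l => (q k).coeff l * (A ^ (l + 1)) i j) m
      _ = (A * N k) i j := hANk.symm
      _ = lam k * N k i j := by rw [hAN]; simp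
  -- put it together
  have hdiff : ((P ^ n) i j : ℂ) - pc j
      = ∑ k ∈ Finset.univ.erase k0, lam k ^ n * ((d k)⁻¹ * N k i j) := by
    rw [hmap, hspec n i j, ← Finset.sum_erase_add _ _ (Finset.mem_univ k0)]
    rw [hNk0 j i, h1, one_pow, one_mul, inv_mul_cancel_left₀ (hdne k0)]
    ring
  have habs : |(P ^ n) i j - pi j|
      = ‖∑ k ∈ Finset.univ.erase k0, lam k ^ n * ((d k)⁻¹ * N k i j)‖ := by
    rw [← hdiff, ← Real.norm_eq_abs, ← Complex.norm_real]
    congr 1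
    rw [hpcdef]
    push_cast
    rfl
  rw [habs, Finset.sum_mul]
  calc ‖∑ k ∈ Finset.univ.erase k0, lam k ^ n * ((d k)⁻¹ * N k i j)‖
      ≤ ∑ k ∈ Finset.univ.erase k0, ‖lam k ^ n * ((d k)⁻¹ * N k i j)‖ :=
        norm_sum_le _ _
    _ ≤ ∑ k ∈ Finset.univ.erase k0,
          (‖∑ l : Fin m, (-1 : ℂ) ^ (m - 1 - (l : ℕ)) *
              esymmOmit lam k (m - 1 - (l : ℕ)) * ((P ^ ((l : ℕ) + 1)) i j : ℂ)‖ /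
            (‖lam k‖ *
              ∏ t ∈ Finset.univ.erase k, ‖lam k - lam t‖)) * ρ ^ n := by
        refine Finset.sum_le_sum fun k hk => ?_
        have hkne : k ≠ k0 := (Finset.mem_erase.mp hk).1
        have hlek : ‖lam k‖ ≤ ρ := hρ.2 ⟨k, hkne, rfl⟩
        have hterm : ‖∑ l : Fin m, (-1 : ℂ) ^ (m - 1 - (l : ℕ)) *
              esymmOmit lam k (m - 1 - (l : ℕ)) * ((P ^ ((l : ℕ) + 1)) i j : ℂ)‖ /
            (‖lam k‖ *
              ∏ t ∈ Finset.univ.erase k, ‖lam k - lam t‖)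
            = ‖(d k)⁻¹ * N k i j‖ := by
          rw [hnum k, norm_mul]
          rw [show (∏ t ∈ Finset.univ.erase k, ‖lam k - lam t‖)
              = ‖d k‖ by rw [hddef]; exact (norm_prod _ _).symm]
          rw [mul_div_mul_left _ _ (by
            exact norm_ne_zero_iff.mpr (hnz k))]
          rw [norm_mul, norm_inv]
          rw [div_eq_mul_inv, mul_comm]
        rw [hterm, norm_mul, norm_pow]
        calc ‖lam k‖ ^ n * ‖(d k)⁻¹ * N k i j‖
            ≤ ρ ^ n * ‖(d k)⁻¹ * N k i j‖ := by
              refine mul_le_mul_of_nonneg_right ?_ (norm_nonneg _)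
              exact pow_le_pow_left₀ (norm_nonneg _) hlek n
          _ = ‖(d k)⁻¹ * N k i j‖ * ρ ^ n := mul_comm _ _
end

section
/- Let P be an m×m row-stochastic matrix that is irreducible and aperiodic, and let π be a stationary distribution of P. Suppose the eigenvalues λ_1, …, λ_m of P (the roots of its characteristic polynomial over ℂ) are all nonzero and pairwise distinct, with λ_1 = 1, and set ρ = max_{2 ≤ k ≤ m} |λ_k|. Then for all indices i, j and all n ≥ 1, |(P^n)_{ij} − π_j| ≤ Ψ · ρ^{n-1}, where Ψ = ∑_{k=2}^m ∏_{t≠k} (1 + |λ_t|) / |λ_k − λ_t|. -/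
open Finset Polynomial

/-- A stationary distribution of `P`. -/
def IsStationaryDistMC {m : ℕ} (P : Matrix (Fin m) (Fin m) ℝ) (pi : Fin m → ℝ) : Prop :=
  (∀ j, 0 ≤ pi j) ∧ (∑ j, pi j = 1) ∧ ∀ j, ∑ i, pi i * P i j = pi j


lemma aux_prod_dvd {ι : Type*} [DecidableEq ι] {lam : ι → ℂ} (hinj : Function.Injective lam)
    (s : Finset ι) (p : ℂ[X]) (hp : ∀ k ∈ s, p.eval (lam k) = 0) :
    (∏ k ∈ s, (X - C (lam k))) ∣ p := by
  induction s using Finset.induction_on generalizing p with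
  | empty => simp
  | @insert a s ha ih =>
    obtain ⟨q, hq⟩ := (dvd_iff_isRoot.mpr (hp a (mem_insert_self a s)) : (X - C (lam a)) ∣ p)
    rw [Finset.prod_insert ha, hq]
    refine mul_dvd_mul_left _ (ih q fun k hk => ?_)
    have h2 := hp k (mem_insert_of_mem hk)
    rw [hq] at h2
    simp only [eval_mul, eval_sub, eval_X, eval_C] at h2
    rcases mul_eq_zero.mp h2 with h | h
    · exact absurd (hinj (sub_eq_zero.mp h)) (fun he => ha (he ▸ hk))
    · exact h

lemma aux_rowsum_mul {m : ℕ} (A B : Matrix (Fin m) (Fin m) ℂ) (a b : ℝ)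
    (hA : ∀ i, ∑ j, ‖A i j‖ ≤ a) (hB : ∀ i, ∑ j, ‖B i j‖ ≤ b)
    (hb : 0 ≤ b) : ∀ i, ∑ j, ‖(A * B) i j‖ ≤ a * b := by
  intro i
  calc ∑ j, ‖(A * B) i j‖
      ≤ ∑ j, ∑ l, ‖A i l‖ * ‖B l j‖ := by
        refine Finset.sum_le_sum fun j _ => ?_
        rw [Matrix.mul_apply]
        exact (norm_sum_le _ _).trans (le_of_eq (by simp [norm_mul]))
    _ = ∑ l, ‖A i l‖ * ∑ j, ‖B l j‖ := by
        rw [Finset.sum_comm]; simp [Finset.mul_sum]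
    _ ≤ ∑ l, ‖A i l‖ * b :=
        Finset.sum_le_sum fun l _ => mul_le_mul_of_nonneg_left (hB l) (norm_nonneg _)
    _ = (∑ l, ‖A i l‖) * b := by rw [Finset.sum_mul]
    _ ≤ a * b := mul_le_mul_of_nonneg_right (hA i) hb

lemma aux_rowsum_one {m : ℕ} (i : Fin m) :
    ∑ j, ‖(1 : Matrix (Fin m) (Fin m) ℂ) i j‖ = 1 := by
  rw [Finset.sum_eq_single i]
  · simp
  · intro j _ h; simp [Matrix.one_apply, (Ne.symm h)]
  · simp

section
variable {m : ℕ} (P : Matrix (Fin m) (Fin m) ℝ)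
  (hP0 : ∀ i j, 0 ≤ P i j) (hP1 : ∀ i, ∑ j, P i j = 1)

-- entries of powers nonneg, rows sum to 1
include hP0 in
lemma aux_pow_nonneg : ∀ n i j, 0 ≤ (P ^ n) i j := by
  intro n
  induction n with
  | zero => intro i j; simp [Matrix.one_apply]; split <;> norm_num
  | succ n ih =>
    intro i j
    rw [pow_succ, Matrix.mul_apply]
    exact Finset.sum_nonneg fun l _ => mul_nonneg (ih i l) (hP0 l j)

include hP1 in
lemma aux_pow_rowsum : ∀ n i, ∑ j, (P ^ n) i j = 1 := by
  intro n
  induction n with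
  | zero => intro i; simp [Matrix.one_apply]
  | succ n ih =>
    intro i
    simp only [pow_succ, Matrix.mul_apply]
    rw [Finset.sum_comm]
    calc ∑ l, ∑ j, (P ^ n) i l * P l j = ∑ l, (P ^ n) i l * ∑ j, P l j := by
          simp [Finset.mul_sum]
      _ = 1 := by simp only [hP1, mul_one]; exact ih i

-- left-fixed vectors are fixed by all powers
lemma aux_fixed_pow {u : Fin m → ℝ} (hu : ∀ j, ∑ i, u i * P i j = u j) :
    ∀ n j, ∑ i, u i * (P ^ n) i j = u j := by
  intro n
  induction n with
  | zero => intro j; rw [Finset.sum_eq_single j] <;> simp +contextual [Matrix.one_apply, Ne.symm]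
  | succ n ih =>
    intro j
    simp only [pow_succ, Matrix.mul_apply, Finset.mul_sum]
    rw [Finset.sum_comm]
    calc ∑ l, ∑ i, u i * ((P ^ n) i l * P l j)
        = ∑ l, (∑ i, u i * (P ^ n) i l) * P l j := by
          simp [Finset.sum_mul, mul_assoc]
      _ = ∑ l, u l * P l j := by simp only [ih]
      _ = u j := hu j

include hP0 hP1 in
-- positivity propagation via irreducibility
lemma aux_pos_all (hirr : ∀ i j, ∃ n : ℕ, 1 ≤ n ∧ 0 < (P ^ n) i j)
    {u : Fin m → ℝ} (hu0 : ∀ j, 0 ≤ u j) (hu : ∀ j, ∑ i, u i * P i j = u j)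
    {j0 : Fin m} (hj0 : 0 < u j0) : ∀ j, 0 < u j := by
  intro j
  obtain ⟨n, -, hn⟩ := hirr j0 j
  have h := aux_fixed_pow P hu n j
  have : u j0 * (P ^ n) j0 j ≤ ∑ i, u i * (P ^ n) i j :=
    Finset.single_le_sum (fun i _ => mul_nonneg (hu0 i) (aux_pow_nonneg P hP0 n i j))
      (Finset.mem_univ j0)
  rw [h] at this
  exact lt_of_lt_of_le (mul_pos hj0 hn) this

include hP0 hP1 in
-- zero propagation via irreducibility
lemma aux_zero_all (hirr : ∀ i j, ∃ n : ℕ, 1 ≤ n ∧ 0 < (P ^ n) i j)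
    {u : Fin m → ℝ} (hu0 : ∀ j, 0 ≤ u j) (hu : ∀ j, ∑ i, u i * P i j = u j)
    {j0 : Fin m} (hj0 : u j0 = 0) : ∀ i, u i = 0 := by
  intro i
  obtain ⟨n, -, hn⟩ := hirr i j0
  have h := aux_fixed_pow P hu n j0
  have hle : u i * (P ^ n) i j0 ≤ ∑ l, u l * (P ^ n) l j0 :=
    Finset.single_le_sum (fun l _ => mul_nonneg (hu0 l) (aux_pow_nonneg P hP0 n l j0))
      (Finset.mem_univ i)
  rw [h, hj0] at hle
  have := mul_nonneg (hu0 i) (le_of_lt hn)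
  have h2 : u i * (P ^ n) i j0 = 0 := le_antisymm hle this
  rcases mul_eq_zero.mp h2 with h | h
  · exact h
  · exact absurd h (ne_of_gt hn)

end

section
variable {m : ℕ} (P : Matrix (Fin m) (Fin m) ℝ)
  (hP0 : ∀ i j, 0 ≤ P i j) (hP1 : ∀ i, ∑ j, P i j = 1)

include hP0 hP1 in
-- a complex left-fixed vector has left-fixed absolute values
lemma aux_abs_fixed {v : Fin m → ℂ} (hv : ∀ j, ∑ i, v i * (P i j : ℂ) = v j) :
    ∀ j, ∑ i, ‖v i‖ * P i j = ‖v j‖ := by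
  have hle : ∀ j, ‖v j‖ ≤ ∑ i, ‖v i‖ * P i j := by
    intro j
    calc ‖v j‖ = ‖∑ i, v i * (P i j : ℂ)‖ := by rw [hv j]
      _ ≤ ∑ i, ‖v i * (P i j : ℂ)‖ := norm_sum_le _ _
      _ = ∑ i, ‖v i‖ * P i j := by
          refine Finset.sum_congr rfl fun i _ => ?_
          rw [norm_mul, Complex.norm_real, Real.norm_eq_abs, abs_of_nonneg (hP0 i j)]
  have hsum : ∑ j, ‖v j‖ = ∑ j, ∑ i, ‖v i‖ * P i j := by
    rw [Finset.sum_comm]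
    simp only [← Finset.mul_sum, hP1, mul_one]
  intro j
  exact ((Finset.sum_eq_sum_iff_of_le fun i _ => hle i).mp hsum j (Finset.mem_univ j)).symm

include hP0 hP1 in
-- eigenvalue bound
lemma aux_eig_bound (hm : 0 < m) {μ : ℂ} {v : Fin m → ℂ} (hv : v ≠ 0)
    (hvec : ∀ i, ∑ j, (P i j : ℂ) * v j = μ * v i) : ‖μ‖ ≤ 1 := by
  obtain ⟨i, -, hi⟩ := Finset.exists_max_image Finset.univ (fun i => ‖v i‖)
    ⟨⟨0, hm⟩, Finset.mem_univ _⟩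
  have hvi : 0 < ‖v i‖ := by
    obtain ⟨l, hl⟩ := Function.ne_iff.mp hv
    exact lt_of_lt_of_le (by simpa using hl) (hi l (Finset.mem_univ l))
  have : ‖μ‖ * ‖v i‖ ≤ 1 * ‖v i‖ := by
    rw [← norm_mul, ← hvec i, one_mul]
    calc ‖∑ j, (P i j : ℂ) * v j‖
        ≤ ∑ j, ‖(P i j : ℂ) * v j‖ := norm_sum_le _ _
      _ = ∑ j, P i j * ‖v j‖ := by
          refine Finset.sum_congr rfl fun j _ => ?_
          rw [norm_mul, Complex.norm_real, Real.norm_eq_abs, abs_of_nonneg (hP0 i j)]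
      _ ≤ ∑ j, P i j * ‖v i‖ :=
          Finset.sum_le_sum fun j _ =>
            mul_le_mul_of_nonneg_left (hi j (Finset.mem_univ j)) (hP0 i j)
      _ = ‖v i‖ := by rw [← Finset.sum_mul, hP1, one_mul]
  exact le_of_mul_le_mul_right this hvi

include hP0 hP1 in
-- uniqueness of the fixed probability vector, complex version
lemma aux_unique (hm : 0 < m) (hirr : ∀ i j, ∃ n : ℕ, 1 ≤ n ∧ 0 < (P ^ n) i j)
    {pi : Fin m → ℝ} (hpi0 : ∀ j, 0 ≤ pi j) (hpi1 : ∑ j, pi j = 1)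
    (hpif : ∀ j, ∑ i, pi i * P i j = pi j)
    {v : Fin m → ℂ} (hvf : ∀ j, ∑ i, v i * (P i j : ℂ) = v j) (hv1 : ∑ j, v j = 1) :
    ∀ j, v j = (pi j : ℂ) := by
  -- pi is everywhere positive
  have hpos : ∀ j, 0 < pi j := by
    have hex : ∃ j0, 0 < pi j0 := by
      by_contra h
      push_neg at h
      have : ∀ j, pi j = 0 := fun j => le_antisymm (h j) (hpi0 j)
      simp [this] at hpi1
    obtain ⟨j0, hj0⟩ := hex
    exact aux_pos_all P hP0 hP1 hirr hpi0 hpif hj0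
  set j0 : Fin m := ⟨0, hm⟩ with hj0def
  set c : ℂ := v j0 / (pi j0 : ℂ) with hc
  set w : Fin m → ℂ := fun j => v j - c * (pi j : ℂ) with hw
  have hwf : ∀ j, ∑ i, w i * (P i j : ℂ) = w j := by
    intro j
    simp only [hw, sub_mul, Finset.sum_sub_distrib, hvf j, mul_assoc, ← Finset.mul_sum]
    congr 1
    have := hpif j
    have : ∑ i, (pi i : ℂ) * (P i j : ℂ) = (pi j : ℂ) := by exact_mod_cast congrArg Complex.ofReal this
    rw [this]
  have hwj0 : w j0 = 0 := by
    simp only [hw, hc]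
    rw [div_mul_cancel₀]
    · ring
    · exact_mod_cast (ne_of_gt (hpos j0))
  have habs := aux_abs_fixed P hP0 hP1 hwf
  have hzero : ∀ i, ‖w i‖ = 0 := by
    have hwj0' : ‖w j0‖ = 0 := by rw [hwj0]; exact norm_zero
    exact aux_zero_all P hP0 hP1 hirr (fun j => norm_nonneg _) habs hwj0'
  have hwz : ∀ j, w j = 0 := fun j => norm_eq_zero.mp (hzero j)
  have hveq : ∀ j, v j = c * (pi j : ℂ) := by
    intro j; have := hwz j; simp only [hw] at this; linear_combination this
  have hc1 : c = 1 := by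
    have : (1 : ℂ) = c * ∑ j, (pi j : ℂ) := by
      rw [← hv1, Finset.mul_sum]
      exact Finset.sum_congr rfl fun j _ => hveq j
    have hs : ∑ j, (pi j : ℂ) = 1 := by exact_mod_cast congrArg Complex.ofReal hpi1
    rw [hs, mul_one] at this
    exact this.symm
  intro j
  rw [hveq j, hc1, one_mul]

end

section
variable {m : ℕ} (P : Matrix (Fin m) (Fin m) ℝ)
  (hP0 : ∀ i j, 0 ≤ P i j) (hP1 : ∀ i, ∑ j, P i j = 1)

lemma aux_map_pow (n : ℕ) :
    (P.map ((↑) : ℝ → ℂ)) ^ n = (P ^ n).map ((↑) : ℝ → ℂ) := by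
  have h1 : P.map ((↑) : ℝ → ℂ) = Complex.ofRealHom.mapMatrix P := rfl
  have h2 : (P ^ n).map ((↑) : ℝ → ℂ) = Complex.ofRealHom.mapMatrix (P ^ n) := rfl
  rw [h1, h2, map_pow]

include hP1 in
lemma aux_c_pow_rowsum (n : ℕ) (i : Fin m) :
    ∑ j, ((P.map ((↑) : ℝ → ℂ)) ^ n) i j = 1 := by
  rw [aux_map_pow]
  have := aux_pow_rowsum P hP1 n i
  simp only [Matrix.map_apply]
  exact_mod_cast congrArg Complex.ofReal this

include hP1 in
lemma aux_aeval_rowsum (q : ℂ[X]) (i : Fin m) :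
    ∑ j, (Polynomial.aeval (P.map ((↑) : ℝ → ℂ)) q) i j = q.eval 1 := by
  induction q using Polynomial.induction_on' with
  | add p q hp hq => simp [map_add, Matrix.add_apply, Finset.sum_add_distrib, hp, hq]
  | monomial n a =>
    rw [aeval_monomial, eval_monomial, ← Algebra.smul_def]
    simp only [Matrix.smul_apply, smul_eq_mul, ← Finset.mul_sum]
    rw [aux_c_pow_rowsum P hP1 n i, mul_one, one_pow, mul_one]

include hP0 hP1 in
lemma aux_rowsum_pc (i : Fin m) :
    ∑ j, ‖(P.map ((↑) : ℝ → ℂ)) i j‖ = 1 := by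
  calc ∑ j, ‖(P.map ((↑) : ℝ → ℂ)) i j‖ = ∑ j, P i j := by
        refine Finset.sum_congr rfl fun j _ => ?_
        rw [Matrix.map_apply, Complex.norm_real, Real.norm_eq_abs, abs_of_nonneg (hP0 i j)]
    _ = 1 := hP1 i

include hP0 hP1 in
lemma aux_nodal_bound (lam : Fin m → ℂ) (s : Finset (Fin m)) :
    ∀ i, ∑ j, ‖(Polynomial.aeval (P.map ((↑) : ℝ → ℂ))
      (∏ t ∈ s, (X - C (lam t)))) i j‖ ≤ ∏ t ∈ s, (1 + ‖lam t‖) := by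
  induction s using Finset.induction_on with
  | empty => intro i; simp only [Finset.prod_empty, map_one]; rw [aux_rowsum_one]
  | @insert a s ha ih =>
    intro i
    rw [Finset.prod_insert ha, Finset.prod_insert ha, map_mul]
    refine aux_rowsum_mul _ _ (1 + ‖lam a‖) _ ?_ ih (Finset.prod_nonneg fun t _ =>
      by positivity) i
    intro l
    rw [map_sub, aeval_X, aeval_C]
    calc ∑ j, ‖(P.map ((↑) : ℝ → ℂ) - algebraMap ℂ _ (lam a)) l j‖
        ≤ ∑ j, (‖(P.map ((↑) : ℝ → ℂ)) l j‖
            + ‖(algebraMap ℂ (Matrix (Fin m) (Fin m) ℂ) (lam a)) l j‖) := by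
          refine Finset.sum_le_sum fun j _ => ?_
          rw [Matrix.sub_apply]
          exact norm_sub_le _ _
      _ = 1 + ‖lam a‖ := by
          rw [Finset.sum_add_distrib, aux_rowsum_pc P hP0 hP1]
          congr 1
          rw [Finset.sum_eq_single l]
          · simp [Matrix.algebraMap_matrix_apply]
          · intro j _ h
            simp [Matrix.algebraMap_matrix_apply, Ne.symm h]
          · simp

lemma aux_abs_lam_le_one {m : ℕ} (hm : 0 < m) (P : Matrix (Fin m) (Fin m) ℝ)
    (hP0 : ∀ i j, 0 ≤ P i j) (hP1 : ∀ i, ∑ j, P i j = 1) {μ : ℂ}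
    (hroot : ((P.map ((↑) : ℝ → ℂ)).charpoly).eval μ = 0) : ‖μ‖ ≤ 1 := by
  have hdet : (Matrix.scalar (Fin m) μ - P.map ((↑) : ℝ → ℂ)).det = 0 := by
    rw [Matrix.charpoly, _root_.eval_det, Matrix.matPolyEquiv_charmatrix,
      eval_sub, eval_X, eval_C] at hroot
    exact hroot
  obtain ⟨v, hv, hmul⟩ := Matrix.exists_mulVec_eq_zero_iff.mpr hdet
  have hvec : ∀ i, ∑ j, (P i j : ℂ) * v j = μ * v i := by
    intro i
    have h := congrFun hmul i
    simp only [Matrix.mulVec, dotProduct, Matrix.sub_apply, sub_mul,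
      Finset.sum_sub_distrib, Pi.zero_apply] at h
    have hs : ∑ j, (Matrix.scalar (Fin m) μ) i j * v j = μ * v i := by
      rw [Finset.sum_eq_single i]
      · simp [Matrix.scalar_apply, Matrix.diagonal_apply]
      · intro j _ hji
        simp [Matrix.scalar_apply, Matrix.diagonal_apply, Ne.symm hji]
      · simp
    rw [hs] at h
    have : ∀ j, (P.map ((↑) : ℝ → ℂ)) i j = (P i j : ℂ) := fun j => rfl
    simp only [this] at h
    linear_combination -h
  exact aux_eig_bound P hP0 hP1 hm hv hvec

noncomputable def auxB {m : ℕ} (lam : Fin m → ℂ) (k : Fin m) : Polynomial ℂ :=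
  C (∏ t ∈ Finset.univ.erase k, (lam k - lam t)⁻¹) *
    ∏ t ∈ Finset.univ.erase k, (X - C (lam t))

lemma auxB_eval_self {m : ℕ} {lam : Fin m → ℂ} (hinj : Function.Injective lam) (k : Fin m) :
    (auxB lam k).eval (lam k) = 1 := by
  rw [auxB, eval_mul, eval_C, eval_prod]
  simp only [eval_sub, eval_X, eval_C]
  rw [← Finset.prod_mul_distrib]
  rw [Finset.prod_congr rfl (fun t ht => inv_mul_cancel₀ (sub_ne_zero.mpr
    (fun he => (Finset.mem_erase.mp ht).1 (hinj he.symm))))]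
  exact Finset.prod_const_one

lemma auxB_eval_ne {m : ℕ} (lam : Fin m → ℂ) {k j : Fin m} (hjk : j ≠ k) :
    (auxB lam k).eval (lam j) = 0 := by
  rw [auxB, eval_mul]
  have h0 : eval (lam j) (∏ t ∈ Finset.univ.erase k, (X - C (lam t))) = 0 := by
    rw [eval_prod]
    exact Finset.prod_eq_zero (Finset.mem_erase.mpr ⟨hjk, Finset.mem_univ j⟩) (by simp)
  rw [h0, mul_zero]

/-- Convergence theorem for Markov chains with the simplified spectral constant `Ψ`. -/
theorem stmt_6 {m : ℕ} (hm : 0 < m) (P : Matrix (Fin m) (Fin m) ℝ)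
    (hP : IsRowStochastic P) (hirr : IsIrreducibleMC P) (hap : IsAperiodicMC P)
    (pi : Fin m → ℝ) (hpi : IsStationaryDistMC P pi)
    (lam : Fin m → ℂ)
    (hchar : (P.map ((↑) : ℝ → ℂ)).charpoly = ∏ k : Fin m, (X - C (lam k)))
    (hinj : Function.Injective lam) (hnz : ∀ k, lam k ≠ 0)
    (h1 : lam ⟨0, hm⟩ = 1)
    (ρ : ℝ)
    (hρ : IsGreatest {r : ℝ | ∃ k : Fin m, k ≠ ⟨0, hm⟩ ∧ ‖lam k‖ = r} ρ) :
    ∀ i j : Fin m, ∀ n : ℕ, 1 ≤ n →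
      |(P ^ n) i j - pi j| ≤
        (∑ k ∈ Finset.univ.erase (⟨0, hm⟩ : Fin m),
          ∏ t ∈ Finset.univ.erase k,
            (1 + ‖lam t‖) / ‖lam k - lam t‖) * ρ ^ (n - 1) := by
  obtain ⟨hP0, hP1⟩ := hP
  obtain ⟨hpi0, hpi1, hpif⟩ := hpi
  -- notations
  have hPc : ∀ i j, (P.map ((↑) : ℝ → ℂ)) i j = (P i j : ℂ) := fun i j => rfl
  -- all eigenvalues have modulus at most 1
  have hlam_le : ∀ k, ‖lam k‖ ≤ 1 := by
    intro k
    refine aux_abs_lam_le_one hm P hP0 hP1 ?_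
    rw [hchar, eval_prod]
    exact Finset.prod_eq_zero (Finset.mem_univ k) (by simp)
  -- rho facts
  obtain ⟨⟨k0, hk0ne, hk0⟩, hub⟩ := hρ
  have hρ0 : 0 ≤ ρ := hk0 ▸ norm_nonneg _
  have hρ1 : ρ ≤ 1 := hk0 ▸ hlam_le k0
  -- the spectral projections
  set Q : Fin m → Matrix (Fin m) (Fin m) ℂ :=
    fun k => Polynomial.aeval (P.map ((↑) : ℝ → ℂ)) (auxB lam k) with hQdef
  -- aeval kills polynomials vanishing at all eigenvalues
  have hkill : ∀ p : Polynomial ℂ, (∀ j, p.eval (lam j) = 0) →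
      Polynomial.aeval (P.map ((↑) : ℝ → ℂ)) p = 0 := by
    intro p hp
    obtain ⟨q, hq⟩ := aux_prod_dvd hinj Finset.univ p (fun j _ => hp j)
    rw [← hchar] at hq
    rw [hq, map_mul, Matrix.aeval_self_charpoly, zero_mul]
  -- spectral decomposition of powers
  have hdecomp : ∀ n : ℕ, (P.map ((↑) : ℝ → ℂ)) ^ n = ∑ k, (lam k ^ n) • Q k := by
    intro n
    have h0 : Polynomial.aeval (P.map ((↑) : ℝ → ℂ))
        (X ^ n - ∑ k, C (lam k ^ n) * auxB lam k) = 0 := by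
      refine hkill _ fun j => ?_
      simp only [eval_sub, eval_pow, eval_X, eval_finset_sum, eval_mul, eval_C]
      rw [Finset.sum_eq_single j]
      · rw [auxB_eval_self hinj j, mul_one, sub_self]
      · intro k _ hkj
        rw [auxB_eval_ne lam (Ne.symm hkj), mul_zero]
      · intro h; exact absurd (Finset.mem_univ j) h
    rw [map_sub, map_pow, aeval_X, map_sum] at h0
    have he : ∀ k : Fin m, Polynomial.aeval (P.map ((↑) : ℝ → ℂ)) (C (lam k ^ n) * auxB lam k)
        = (lam k ^ n) • Q k := by
      intro k
      rw [map_mul, aeval_C, ← Algebra.smul_def]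
    rw [Finset.sum_congr rfl (fun k _ => he k)] at h0
    exact sub_eq_zero.mp h0
  -- rows of Q z are left-fixed vectors
  have hQzfix : ∀ i j', ∑ l, Q ⟨0, hm⟩ i l * (P l j' : ℂ) = Q ⟨0, hm⟩ i j' := by
    have h0 : Polynomial.aeval (P.map ((↑) : ℝ → ℂ)) (auxB lam ⟨0, hm⟩ * (X - C 1)) = 0 := by
      refine hkill _ fun j => ?_
      rw [eval_mul, eval_sub, eval_X, eval_C]
      by_cases hjz : j = (⟨0, hm⟩ : Fin m)
      · rw [hjz, h1, sub_self, mul_zero]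
      · rw [auxB_eval_ne lam hjz, zero_mul]
    rw [map_mul, map_sub, aeval_X, aeval_C, map_one] at h0
    have h3 : Q ⟨0, hm⟩ * (P.map ((↑) : ℝ → ℂ)) - Q ⟨0, hm⟩ * 1 = 0 := by
      rw [← mul_sub]; exact h0
    have hQP : Q ⟨0, hm⟩ * (P.map ((↑) : ℝ → ℂ)) = Q ⟨0, hm⟩ := by
      have h4 := sub_eq_zero.mp h3
      rwa [mul_one] at h4
    intro i j'
    have h2 : (Q ⟨0, hm⟩ * (P.map ((↑) : ℝ → ℂ))) i j' = Q ⟨0, hm⟩ i j' := by rw [hQP]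
    rw [Matrix.mul_apply] at h2
    exact h2
  -- rows of Q z equal pi
  have hQz : ∀ i j', Q ⟨0, hm⟩ i j' = (pi j' : ℂ) := by
    intro i
    have hsum1 : ∑ j', Q ⟨0, hm⟩ i j' = 1 := by
      rw [hQdef]
      rw [aux_aeval_rowsum P hP1 (auxB lam ⟨0, hm⟩) i]
      have h5 := auxB_eval_self hinj (⟨0, hm⟩ : Fin m)
      rwa [h1] at h5
    exact aux_unique P hP0 hP1 hm hirr hpi0 hpi1 hpif (fun j' => hQzfix i j') hsum1
  -- entrywise bound on Q k
  have hQbound : ∀ k i j', ‖Q k i j'‖ ≤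
      ∏ t ∈ Finset.univ.erase k, (1 + ‖lam t‖) / ‖lam k - lam t‖ := by
    intro k i j'
    have hA := aux_nodal_bound P hP0 hP1 lam (Finset.univ.erase k) i
    have hentry : ‖(Polynomial.aeval (P.map ((↑) : ℝ → ℂ))
        (∏ t ∈ Finset.univ.erase k, (X - C (lam t)))) i j'‖
        ≤ ∏ t ∈ Finset.univ.erase k, (1 + ‖lam t‖) :=
      le_trans (Finset.single_le_sum (fun j _ => norm_nonneg _) (Finset.mem_univ j')) hA
    have hQeq : Q k i j' = (∏ t ∈ Finset.univ.erase k, (lam k - lam t)⁻¹) *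
        ((Polynomial.aeval (P.map ((↑) : ℝ → ℂ)) (∏ t ∈ Finset.univ.erase k, (X - C (lam t)))) i j') := by
      rw [hQdef]
      show (Polynomial.aeval (P.map ((↑) : ℝ → ℂ)) (auxB lam k)) i j' = _
      rw [auxB, map_mul, aeval_C, ← Algebra.smul_def, Matrix.smul_apply, smul_eq_mul]
    rw [hQeq, norm_mul]
    have habsc : ‖∏ t ∈ Finset.univ.erase k, (lam k - lam t)⁻¹‖
        = ∏ t ∈ Finset.univ.erase k, (‖lam k - lam t‖)⁻¹ := by
      rw [norm_prod]
      exact Finset.prod_congr rfl fun t _ => norm_inv _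
    rw [habsc]
    calc (∏ t ∈ Finset.univ.erase k, (‖lam k - lam t‖)⁻¹) * ‖_‖
        ≤ (∏ t ∈ Finset.univ.erase k, (‖lam k - lam t‖)⁻¹) *
            ∏ t ∈ Finset.univ.erase k, (1 + ‖lam t‖) :=
          mul_le_mul_of_nonneg_left hentry
            (Finset.prod_nonneg fun t _ => inv_nonneg.mpr (norm_nonneg _))
      _ = ∏ t ∈ Finset.univ.erase k, (1 + ‖lam t‖) / ‖lam k - lam t‖ := by
          rw [← Finset.prod_mul_distrib]
          exact Finset.prod_congr rfl fun t _ => by rw [div_eq_mul_inv, mul_comm]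
  -- final computation
  intro i j n hn
  have hentry : ((P ^ n) i j : ℂ) = ∑ k, lam k ^ n * Q k i j := by
    have h2 := congrFun (congrFun (hdecomp n) i) j
    rw [aux_map_pow] at h2
    calc ((P ^ n) i j : ℂ) = ((P ^ n).map ((↑) : ℝ → ℂ)) i j := rfl
      _ = (∑ k, (lam k ^ n) • Q k) i j := h2
      _ = ∑ k, lam k ^ n * Q k i j := by
          rw [Matrix.sum_apply]
          exact Finset.sum_congr rfl fun k _ => rfl
  have hsplit : ((P ^ n) i j : ℂ) - (pi j : ℂ)
      = ∑ k ∈ Finset.univ.erase (⟨0, hm⟩ : Fin m), lam k ^ n * Q k i j := by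
    rw [hentry, ← Finset.sum_erase_add _ _ (Finset.mem_univ (⟨0, hm⟩ : Fin m))]
    rw [h1, one_pow, one_mul, hQz i j]
    ring
  have habs : |(P ^ n) i j - pi j| = ‖((P ^ n) i j : ℂ) - (pi j : ℂ)‖ := by
    rw [← Complex.ofReal_sub, Complex.norm_real, Real.norm_eq_abs]
  rw [habs, hsplit]
  have hterm : ∀ k ∈ Finset.univ.erase (⟨0, hm⟩ : Fin m),
      ‖lam k ^ n * Q k i j‖ ≤
        (∏ t ∈ Finset.univ.erase k,
          (1 + ‖lam t‖) / ‖lam k - lam t‖) * ρ ^ (n - 1) := by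
    intro k hk
    have hkne : k ≠ (⟨0, hm⟩ : Fin m) := (Finset.mem_erase.mp hk).1
    have hkρ : ‖lam k‖ ≤ ρ := hub ⟨k, hkne, rfl⟩
    have hpow : ‖lam k‖ ^ n ≤ ρ ^ (n - 1) := by
      calc ‖lam k‖ ^ n ≤ ρ ^ n := pow_le_pow_left₀ (norm_nonneg _) hkρ n
        _ ≤ ρ ^ (n - 1) := pow_le_pow_of_le_one hρ0 hρ1 (Nat.sub_le n 1)
    rw [norm_mul, norm_pow]
    calc ‖lam k‖ ^ n * ‖Q k i j‖
        ≤ ρ ^ (n - 1) * (∏ t ∈ Finset.univ.erase k,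
            (1 + ‖lam t‖) / ‖lam k - lam t‖) :=
          mul_le_mul hpow (hQbound k i j) (norm_nonneg _) (by positivity)
      _ = _ := mul_comm _ _
  calc ‖∑ k ∈ Finset.univ.erase (⟨0, hm⟩ : Fin m), lam k ^ n * Q k i j‖
      ≤ ∑ k ∈ Finset.univ.erase (⟨0, hm⟩ : Fin m), ‖lam k ^ n * Q k i j‖ :=
        norm_sum_le _ _
    _ ≤ ∑ k ∈ Finset.univ.erase (⟨0, hm⟩ : Fin m),
          (∏ t ∈ Finset.univ.erase k,
            (1 + ‖lam t‖) / ‖lam k - lam t‖) * ρ ^ (n - 1) :=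
        Finset.sum_le_sum hterm
    _ = _ := (Finset.sum_mul _ _ _).symm
end
end

section
/- Let Γ be a connected k-regular simple undirected graph on m ≥ 2 vertices with adjacency matrix A, and let P = (1/k)·A, so that P is a symmetric row-stochastic matrix. Suppose P is aperiodic and the eigenvalues of A are all simple and nonzero. Let τ be the second largest eigenvalue of A in absolute value, i.e., τ = max{|μ| : μ an eigenvalue of A, |μ| ≠ k}. Then for every pair of vertices v_i, v_j there is a walk in Γ from v_i to v_j of length at most ⌈log(m−1) / log(k/τ)⌉; in particular, the diameter of Γ satisfies D(Γ) ≤ ⌈log(m−1) / log(k/τ)⌉. -/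
open Finset Polynomial Matrix

set_option linter.unusedSectionVars false
set_option maxHeartbeats 1000000

namespace Stmt9Aux

variable {m k : ℕ} {G : SimpleGraph (Fin m)} [DecidableRel G.Adj]





variable {m k : ℕ} {G : SimpleGraph (Fin m)} [DecidableRel G.Adj]

lemma sum_eq_card_mul {ι : Type*} (s : Finset ι) (f : ι → ℝ) (c : ℝ)
    (hle : ∀ b ∈ s, f b ≤ c) (hsum : ∑ b ∈ s, f b = s.card * c) :
    ∀ b ∈ s, f b = c := by
  by_contra h
  push_neg at h
  obtain ⟨b0, hb0, hne⟩ := h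
  have hlt : ∑ b ∈ s, f b < ∑ _b ∈ s, c :=
    Finset.sum_lt_sum hle ⟨b0, hb0, lt_of_le_of_ne (hle b0 hb0) hne⟩
  rw [Finset.sum_const, nsmul_eq_mul] at hlt
  linarith [hsum ▸ hlt]

lemma walk_propagate (S : Set (Fin m)) (hS : ∀ a ∈ S, ∀ b, G.Adj a b → b ∈ S)
    {a b : Fin m} (w : G.Walk a b) (ha : a ∈ S) : b ∈ S := by
  induction w with
  | nil => exact ha
  | cons h p ih => exact ih (hS _ ha _ h)

lemma eigen_abs_le (hreg : G.IsRegularOfDegree k) (v : Fin m → ℝ) (hv : v ≠ 0)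
    (t : ℝ) (h : G.adjMatrix ℝ *ᵥ v = t • v) : |t| ≤ (k : ℝ) := by
  have hne : (Finset.univ : Finset (Fin m)).Nonempty := by
    by_contra hh
    exact hv (funext fun x => absurd (Finset.mem_univ x) (fun hx => hh ⟨x, hx⟩))
  obtain ⟨a, -, ha⟩ := Finset.exists_max_image Finset.univ (fun i => |v i|) hne
  have hva : 0 < |v a| := by
    rcases Function.ne_iff.mp hv with ⟨x, hx⟩
    have h1 := ha x (Finset.mem_univ x)
    have h2 : 0 < |v x| := abs_pos.mpr hx
    simpa using lt_of_lt_of_le h2 h1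
  have hAa : (G.adjMatrix ℝ *ᵥ v) a = ∑ u ∈ G.neighborFinset a, v u :=
    G.adjMatrix_mulVec_apply a v
  have h1 : |t| * |v a| = |∑ u ∈ G.neighborFinset a, v u| := by
    rw [← abs_mul, ← hAa, h]; rfl
  have h2 : |∑ u ∈ G.neighborFinset a, v u| ≤ ∑ u ∈ G.neighborFinset a, |v u| :=
    Finset.abs_sum_le_sum_abs _ _
  have h3 : ∑ u ∈ G.neighborFinset a, |v u| ≤ ∑ _u ∈ G.neighborFinset a, |v a| :=
    Finset.sum_le_sum (fun u _ => ha u (Finset.mem_univ u))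
  rw [Finset.sum_const, nsmul_eq_mul] at h3
  have hcard : ((G.neighborFinset a).card : ℝ) = (k : ℝ) := by
    have : (G.neighborFinset a).card = G.degree a := rfl
    rw [this, hreg a]
  rw [hcard] at h3
  have : |t| * |v a| ≤ (k : ℝ) * |v a| := by
    calc |t| * |v a| = |∑ u ∈ G.neighborFinset a, v u| := h1
    _ ≤ _ := h2
    _ ≤ _ := h3
  exact le_of_mul_le_mul_right this hva

lemma perron_const (hreg : G.IsRegularOfDegree k) (hconn : G.Connected)
    (v : Fin m → ℝ) (h : G.adjMatrix ℝ *ᵥ v = (k : ℝ) • v) :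
    ∀ a b : Fin m, v a = v b := by
  have hne : (Finset.univ : Finset (Fin m)).Nonempty := by
    have : Nonempty (Fin m) := hconn.nonempty
    exact Finset.univ_nonempty
  obtain ⟨a0, -, ha0⟩ := Finset.exists_max_image Finset.univ v hne
  have key : ∀ x : Fin m, v x = v a0 := by
    intro x
    have hS : ∀ a ∈ {y : Fin m | v y = v a0}, ∀ b, G.Adj a b → b ∈ {y : Fin m | v y = v a0} := by
      intro a haS b hab
      have hAa : (G.adjMatrix ℝ *ᵥ v) a = ∑ u ∈ G.neighborFinset a, v u :=
        G.adjMatrix_mulVec_apply a v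
      have hsum : ∑ u ∈ G.neighborFinset a, v u = ((G.neighborFinset a).card : ℝ) * v a0 := by
        have hc : (G.neighborFinset a).card = k := hreg a
        have : (G.adjMatrix ℝ *ᵥ v) a = (k : ℝ) * v a := by rw [h]; rfl
        rw [hAa] at this
        rw [this, hc, haS]
      have := sum_eq_card_mul (G.neighborFinset a) v (v a0)
        (fun u _ => ha0 u (Finset.mem_univ u)) hsum
      exact this b (G.mem_neighborFinset a b |>.mpr hab)
    obtain ⟨w⟩ := (hconn a0 x)
    exact walk_propagate _ hS w rfl
  intro a b; rw [key a, key b]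


lemma walk_parity (s : Fin m → Bool) (hs : ∀ a b : Fin m, G.Adj a b → s a ≠ s b)
    {a b : Fin m} (w : G.Walk a b) : Even w.length ↔ s a = s b := by
  induction w with
  | nil => simp
  | @cons a c b h p ih =>
    have hac := hs a c h
    rw [SimpleGraph.Walk.length_cons, Nat.even_add_one, ih]
    cases hsa : s a <;> cases hsb : s b <;> cases hsc : s c <;> simp_all

lemma no_bipartite {P : Matrix (Fin m) (Fin m) ℝ} (hk : 0 < k) [Nonempty (Fin m)]
    (hP : P = ((k : ℝ))⁻¹ • G.adjMatrix ℝ)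
    (hap : ∀ i, ∀ d : ℕ, (∀ n : ℕ, 1 ≤ n → 0 < (P ^ n) i i → d ∣ n) → d = 1)
    (s : Fin m → Bool) (hs : ∀ a b : Fin m, G.Adj a b → s a ≠ s b) : False := by
  obtain ⟨i⟩ := (inferInstance : Nonempty (Fin m))
  have h2 : (2 : ℕ) = 1 := by
    apply hap i 2
    intro n hn hpos
    have hPn : (P ^ n) i i = ((k : ℝ))⁻¹ ^ n * (G.adjMatrix ℝ ^ n) i i := by
      rw [hP, _root_.smul_pow]; rfl
    rw [hPn] at hpos
    have hkpos : (0 : ℝ) < ((k : ℝ))⁻¹ ^ n := by positivity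
    have hApos : 0 < (G.adjMatrix ℝ ^ n) i i := by
      by_contra hle
      push_neg at hle
      nlinarith
    rw [G.adjMatrix_pow_apply_eq_card_walk] at hApos
    have : 0 < Fintype.card {p : G.Walk i i | p.length = n} := by exact_mod_cast hApos
    obtain ⟨⟨w, hw⟩⟩ := Fintype.card_pos_iff.mp this
    have heven : Even w.length := (walk_parity s hs w).mpr rfl
    rw [Set.mem_setOf_eq] at hw
    rw [hw] at heven
    exact heven.two_dvd
  norm_num at h2

lemma no_neg_k (hk : 0 < k) (hreg : G.IsRegularOfDegree k) (hconn : G.Connected)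
    {P : Matrix (Fin m) (Fin m) ℝ}
    (hP : P = ((k : ℝ))⁻¹ • G.adjMatrix ℝ)
    (hap : ∀ i, ∀ d : ℕ, (∀ n : ℕ, 1 ≤ n → 0 < (P ^ n) i i → d ∣ n) → d = 1)
    (v : Fin m → ℝ) (hv : v ≠ 0)
    (h : G.adjMatrix ℝ *ᵥ v = (-(k : ℝ)) • v) : False := by
  have : Nonempty (Fin m) := hconn.nonempty
  have hne : (Finset.univ : Finset (Fin m)).Nonempty := Finset.univ_nonempty
  obtain ⟨a0, -, ha0⟩ := Finset.exists_max_image Finset.univ (fun i => |v i|) hne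
  set M := |v a0| with hM
  have hMpos : 0 < M := by
    rcases Function.ne_iff.mp hv with ⟨x, hx⟩
    exact lt_of_lt_of_le (abs_pos.mpr hx) (ha0 x (Finset.mem_univ x))
  -- neighbors of a max-abs vertex are the negation
  have key : ∀ a : Fin m, |v a| = M → ∀ b, G.Adj a b → v b = -v a := by
    intro a haM b hab
    have hAa : ∑ u ∈ G.neighborFinset a, v u = -(k : ℝ) * v a := by
      have : (G.adjMatrix ℝ *ᵥ v) a = (-(k : ℝ) • v) a := by rw [h]
      rw [G.adjMatrix_mulVec_apply a v] at this
      simpa using this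
    have hc : ((G.neighborFinset a).card : ℝ) = (k : ℝ) := by
      have h0 : (G.neighborFinset a).card = k := hreg a
      exact_mod_cast h0
    rcases le_or_gt (v a) 0 with hva | hva
    · -- v a = -M ≤ 0 : each v u ≤ M = -v a
      have hva' : v a = -M := by
        rcases abs_cases (v a) with ⟨h1, _⟩ | ⟨h1, _⟩
        · nlinarith [haM]
        · rw [← haM, h1]; ring
      have := sum_eq_card_mul (G.neighborFinset a) v M
        (fun u _ => le_trans (le_abs_self _) (ha0 u (Finset.mem_univ u)))
        (by rw [hAa, hva', hc]; ring)
      have hb := this b (G.mem_neighborFinset a b |>.mpr hab)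
      rw [hb, hva']; ring
    · have hva' : v a = M := by
        rw [← haM]; exact (abs_of_pos hva).symm
      have := sum_eq_card_mul (G.neighborFinset a) (fun u => -v u) M
        (fun u _ => le_trans (neg_le_abs _) (ha0 u (Finset.mem_univ u)))
        (by rw [Finset.sum_neg_distrib, hAa, hva', hc]; ring)
      have hb := this b (G.mem_neighborFinset a b |>.mpr hab)
      linarith
  have hall : ∀ x : Fin m, |v x| = M := by
    intro x
    have hS : ∀ a ∈ {y : Fin m | |v y| = M}, ∀ b, G.Adj a b → b ∈ {y : Fin m | |v y| = M} := by
      intro a haS b hab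
      have := key a haS b hab
      simp only [Set.mem_setOf_eq, this, abs_neg]
      exact haS
    obtain ⟨w⟩ := hconn a0 x
    exact walk_propagate _ hS w rfl
  set s : Fin m → Bool := fun x => decide (0 < v x) with hsdef
  have hs : ∀ a b : Fin m, G.Adj a b → s a ≠ s b := by
    intro a b hab
    have hvb := key a (hall a) b hab
    have hva : v a ≠ 0 := by
      intro h0
      rw [h0] at hvb
      have := hall a
      rw [h0] at this
      simp at this
      exact absurd this.symm (ne_of_gt hMpos)
    rcases lt_or_gt_of_ne hva with h1 | h1
    · have h2 : 0 < v b := by rw [hvb]; linarith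
      simp [hsdef, h1, h2, not_lt.mpr (le_of_lt h1)]
    · have h2 : v b < 0 := by rw [hvb]; linarith
      simp [hsdef, h1, h2, not_lt.mpr (le_of_lt h2)]
  exact no_bipartite hk hP hap s hs




lemma eval_charpoly {n : ℕ} (M : Matrix (Fin n) (Fin n) ℝ) (x : ℝ) :
    M.charpoly.eval x = (x • (1 : Matrix (Fin n) (Fin n) ℝ) - M).det := by
  have h := (Polynomial.evalRingHom x).map_det M.charmatrix
  have h2 : M.charpoly.eval x = (M.charmatrix.map (Polynomial.evalRingHom x)).det := h
  rw [h2]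
  congr 1
  ext i j
  by_cases hij : i = j <;>
    simp [Matrix.charmatrix_apply, Matrix.map_apply, Matrix.one_apply, hij,
      Matrix.diagonal_apply, Matrix.smul_apply, Matrix.sub_apply]

lemma det_smul_one_sub_diag {n : ℕ} (lam : Fin n → ℝ) (x : ℝ) :
    (x • (1 : Matrix (Fin n) (Fin n) ℝ) - Matrix.diagonal lam).det = ∏ l, (x - lam l) := by
  have : x • (1 : Matrix (Fin n) (Fin n) ℝ) - Matrix.diagonal lam
      = Matrix.diagonal (fun l => x - lam l) := by
    ext i j
    by_cases hij : i = j <;>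
      simp [Matrix.one_apply, hij, Matrix.diagonal_apply, Matrix.smul_apply, Matrix.sub_apply]
  rw [this, Matrix.det_diagonal]



end Stmt9Aux

section Main

open Stmt9Aux

/-- Chung's diameter bound for connected `k`-regular graphs: every pair of vertices is
joined by a walk of length at most `⌈log(m−1)/log(k/τ)⌉`, and hence the diameter is at
most `⌈log(m−1)/log(k/τ)⌉`, where `τ` is the largest absolute value of an eigenvalue of
the adjacency matrix other than `k`. -/
theorem stmt_9 {m k : ℕ} (hm : 2 ≤ m) (hk : 0 < k)
    (G : SimpleGraph (Fin m)) [DecidableRel G.Adj]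
    (hreg : G.IsRegularOfDegree k) (hconn : G.Connected)
    (P : Matrix (Fin m) (Fin m) ℝ) (hP : P = ((k : ℝ))⁻¹ • G.adjMatrix ℝ)
    (hap : ∀ i, ∀ d : ℕ, (∀ n : ℕ, 1 ≤ n → 0 < (P ^ n) i i → d ∣ n) → d = 1)
    (μ : Fin m → ℝ)
    (hchar : (G.adjMatrix ℝ).charpoly = ∏ i : Fin m, (X - C (μ i)))
    (hinj : Function.Injective μ) (hnz : ∀ i, μ i ≠ 0)
    (τ : ℝ)
    (hτ : IsGreatest {r : ℝ | ∃ i : Fin m, |μ i| ≠ (k : ℝ) ∧ |μ i| = r} τ) :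
    (∀ i j : Fin m, ∃ w : G.Walk i j,
        (w.length : ℤ) ≤ ⌈Real.log ((m : ℝ) - 1) / Real.log ((k : ℝ) / τ)⌉) ∧
    (G.diam : ℤ) ≤ ⌈Real.log ((m : ℝ) - 1) / Real.log ((k : ℝ) / τ)⌉ := by
  have hmR : (2 : ℝ) ≤ (m : ℝ) := by exact_mod_cast hm
  have hm0 : (0 : ℝ) < (m : ℝ) := by linarith
  have hkR : (0 : ℝ) < (k : ℝ) := by exact_mod_cast hk
  have : Nonempty (Fin m) := ⟨⟨0, by omega⟩⟩
  set A := G.adjMatrix ℝ with hAdef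
  have hA : A.IsHermitian := by
    ext i j
    simp [Matrix.conjTranspose_apply, hAdef, G.adj_comm]
  set lam : Fin m → ℝ := hA.eigenvalues with hlamdef
  set V : Matrix (Fin m) (Fin m) ℝ := (hA.eigenvectorUnitary : Matrix (Fin m) (Fin m) ℝ) with hVdef
  have hUU : V * star V = 1 := (Matrix.mem_unitaryGroup_iff).mp hA.eigenvectorUnitary.2
  have hUU' : star V * V = 1 := mul_eq_one_comm.mp hUU
  have hofReal : (RCLike.ofReal ∘ hA.eigenvalues : Fin m → ℝ) = lam := by
    funext l
    simp [RCLike.ofReal_real_eq_id, hlamdef]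
  have hsp : A = V * Matrix.diagonal lam * star V := by
    have := hA.spectral_theorem
    rwa [hofReal] at this
  -- power formula
  have hpow : ∀ n : ℕ, A ^ n = V * Matrix.diagonal (fun l => lam l ^ n) * star V := by
    intro n
    induction n with
    | zero =>
      simp only [pow_zero, Matrix.diagonal_one, Matrix.mul_one]
      exact hUU.symm
    | succ n ih =>
      rw [pow_succ, ih, hsp]
      calc V * Matrix.diagonal (fun l => lam l ^ n) * star V * (V * Matrix.diagonal lam * star V)
          = V * Matrix.diagonal (fun l => lam l ^ n) * (star V * V) * Matrix.diagonal lam * star V := by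
            simp only [Matrix.mul_assoc]
        _ = V * (Matrix.diagonal (fun l => lam l ^ n) * Matrix.diagonal lam) * star V := by
            rw [hUU']
            simp only [Matrix.mul_one, Matrix.mul_assoc]
        _ = V * Matrix.diagonal (fun l => lam l ^ (n + 1)) * star V := by
            rw [Matrix.diagonal_mul_diagonal]
            simp [pow_succ]
  -- entry formula
  have hent : ∀ (n : ℕ) (i j : Fin m),
      (A ^ n) i j = ∑ l, lam l ^ n * (V i l * V j l) := by
    intro n i j
    rw [hpow n, Matrix.mul_apply]
    refine Finset.sum_congr rfl fun l _ => ?_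
    rw [Matrix.mul_diagonal, Matrix.star_apply, star_trivial]
    ring
  -- columns are eigenvectors
  have hcol : ∀ l : Fin m, A *ᵥ (fun i => V i l) = lam l • (fun i => V i l) := by
    intro l
    have h1 := hA.mulVec_eigenvectorBasis l
    have h2 : (fun i => V i l) = ⇑(hA.eigenvectorBasis l) := by
      funext i
      exact hA.eigenvectorUnitary_apply i l
    rw [h2]
    exact h1
  have hcolnorm : ∀ l : Fin m, ∑ i, V i l * V i l = 1 := by
    intro l
    have := congrFun (congrFun hUU' l) l
    rw [Matrix.mul_apply] at this
    simp only [Matrix.star_apply, star_trivial, Matrix.one_apply_eq] at this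
    rw [← this]
  have hrow : ∀ i : Fin m, ∑ l, V i l * V i l = 1 := by
    intro i
    have := congrFun (congrFun hUU i) i
    rw [Matrix.mul_apply] at this
    simp only [Matrix.star_apply, star_trivial, Matrix.one_apply_eq] at this
    rw [← this]
  have hroworth : ∀ i j : Fin m, i ≠ j → ∑ l, V i l * V j l = 0 := by
    intro i j hij
    have := congrFun (congrFun hUU i) j
    rw [Matrix.mul_apply] at this
    simp only [Matrix.star_apply, star_trivial, Matrix.one_apply_ne hij] at this
    rw [← this]
  have hcolne : ∀ l : Fin m, (fun i => V i l) ≠ 0 := by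
    intro l h0
    have hz : ∀ i, V i l = 0 := fun i => congrFun h0 i
    have := hcolnorm l
    simp only [hz, mul_zero, Finset.sum_const_zero] at this
    norm_num at this
  -- eigenvalue bounds
  have habs : ∀ l : Fin m, |lam l| ≤ (k : ℝ) :=
    fun l => eigen_abs_le hreg _ (hcolne l) _ (hcol l)
  have hnegk : ∀ l : Fin m, lam l ≠ -(k : ℝ) := by
    intro l hl
    refine no_neg_k hk hreg hconn hP hap _ (hcolne l) ?_
    rw [← hl]
    exact hcol l
  -- det formula and root multiset equality
  have hdet : ∀ x : ℝ, A.charpoly.eval x = ∏ l, (x - lam l) := by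
    intro x
    rw [Stmt9Aux.eval_charpoly]
    have hconj : x • (1 : Matrix (Fin m) (Fin m) ℝ) - A
        = V * (x • (1 : Matrix (Fin m) (Fin m) ℝ) - Matrix.diagonal lam) * star V := by
      rw [Matrix.mul_sub, Matrix.sub_mul, hsp]
      congr 1
      rw [mul_smul_comm, Matrix.mul_one, smul_mul_assoc, hUU]
    rw [hconj, Matrix.det_mul, Matrix.det_mul, det_smul_one_sub_diag]
    have hab : V.det * (star V).det = 1 := by
      rw [← Matrix.det_mul, hUU, Matrix.det_one]
    calc V.det * (∏ l, (x - lam l)) * (star V).det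
        = (∏ l, (x - lam l)) * (V.det * (star V).det) := by ring
      _ = ∏ l, (x - lam l) := by rw [hab, mul_one]
  have hms : Multiset.map μ Finset.univ.val = Multiset.map lam Finset.univ.val := by
    have h1 : ((Multiset.map μ Finset.univ.val).map (fun a => X - C a)).prod
        = ((Multiset.map lam Finset.univ.val).map (fun a => X - C a)).prod := by
      rw [Multiset.map_map, Multiset.map_map]
      have e1 : (Multiset.map ((fun a => X - C a) ∘ μ) Finset.univ.val).prod
          = ∏ i : Fin m, (X - C (μ i)) := (Finset.prod_eq_multiset_prod _ _).symm
      have e2 : (Multiset.map ((fun a => X - C a) ∘ lam) Finset.univ.val).prod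
          = ∏ l : Fin m, (X - C (lam l)) := (Finset.prod_eq_multiset_prod _ _).symm
      rw [e1, e2]
      refine Polynomial.funext fun x => ?_
      have hx1 : Polynomial.eval x (∏ i : Fin m, (X - C (μ i))) = ∏ i : Fin m, (x - μ i) := by
        rw [Polynomial.eval_prod]
        exact Finset.prod_congr rfl fun i _ => by simp
      have hx2 : Polynomial.eval x (∏ l : Fin m, (X - C (lam l))) = ∏ l : Fin m, (x - lam l) := by
        rw [Polynomial.eval_prod]
        exact Finset.prod_congr rfl fun l _ => by simp
      rw [hx1, hx2, ← hdet x, hchar, hx1]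
    have := congrArg Polynomial.roots h1
    rwa [Polynomial.roots_multiset_prod_X_sub_C, Polynomial.roots_multiset_prod_X_sub_C] at this
  have hexist_mu : ∀ l : Fin m, ∃ i, μ i = lam l := by
    intro l
    have : lam l ∈ Multiset.map lam Finset.univ.val :=
      Multiset.mem_map.mpr ⟨l, Finset.mem_univ l, rfl⟩
    rw [← hms] at this
    obtain ⟨i, -, hi⟩ := Multiset.mem_map.mp this
    exact ⟨i, hi⟩
  have hexist_lam : ∀ i : Fin m, ∃ l, lam l = μ i := by
    intro i
    have : μ i ∈ Multiset.map μ Finset.univ.val :=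
      Multiset.mem_map.mpr ⟨i, Finset.mem_univ i, rfl⟩
    rw [hms] at this
    obtain ⟨l, -, hl⟩ := Multiset.mem_map.mp this
    exact ⟨l, hl⟩
  have hlam_inj : Function.Injective lam := by
    have hnd : (Multiset.map lam Finset.univ.val).Nodup := by
      rw [← hms]
      exact Multiset.Nodup.map hinj Finset.univ.nodup
    intro a b hab
    exact Multiset.inj_on_of_nodup_map hnd a (Finset.mem_univ_val a) b (Finset.mem_univ_val b) hab
  have hlamnz : ∀ l : Fin m, lam l ≠ 0 := by
    intro l hl
    obtain ⟨i, hi⟩ := hexist_mu l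
    exact hnz i (by rw [hi, hl])

  -- m ≥ 3
  have hm3 : 3 ≤ m := by
    by_contra hlt
    push_neg at hlt
    have hm2 : m = 2 := by omega
    have hs : ∀ a b : Fin m, G.Adj a b →
        (decide (a = ⟨0, by omega⟩) : Bool) ≠ (decide (b = ⟨0, by omega⟩) : Bool) := by
      intro a b hab
      have hne : a ≠ b := G.ne_of_adj hab
      have hvne : a.val ≠ b.val := fun h => hne (Fin.ext h)
      have ha2 : a.val < 2 := hm2 ▸ a.isLt
      have hb2 : b.val < 2 := hm2 ▸ b.isLt
      by_cases haz : a = (⟨0, by omega⟩ : Fin m) <;> by_cases hbz : b = (⟨0, by omega⟩ : Fin m)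
      · exact absurd (haz.trans hbz.symm) hne
      · simp [haz, hbz]
      · simp [haz, hbz]
      · exfalso
        have h1 : a.val ≠ 0 := fun h => haz (Fin.ext h)
        have h2 : b.val ≠ 0 := fun h => hbz (Fin.ext h)
        omega
    exact no_bipartite hk hP hap _ hs
  have hm3R : (3 : ℝ) ≤ (m : ℝ) := by exact_mod_cast hm3
  -- τ facts
  obtain ⟨i1, hi1ne, hi1τ⟩ := hτ.1
  have hτpos : 0 < τ := by rw [← hi1τ]; exact abs_pos.mpr (hnz i1)
  have hτlek : τ ≤ (k : ℝ) := by
    obtain ⟨l, hl⟩ := hexist_lam i1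
    rw [← hi1τ, ← hl]
    exact habs l
  have hτltk : τ < (k : ℝ) := lt_of_le_of_ne hτlek (fun h => hi1ne (hi1τ.trans h))
  -- the Perron index l0
  have hdetk : (∏ l, ((k : ℝ) - lam l)) = 0 := by
    rw [← hdet k, Stmt9Aux.eval_charpoly]
    refine (Matrix.exists_mulVec_eq_zero_iff).mp ⟨(fun _ => 1), ?_, ?_⟩
    · intro h0
      have := congrFun h0 ⟨0, by omega⟩
      norm_num at this
    · funext x
      have h1 : (A *ᵥ (fun _ => (1 : ℝ))) x = (k : ℝ) := by
        rw [show (A *ᵥ fun _ => (1:ℝ)) x = ∑ u ∈ G.neighborFinset x, (1:ℝ) from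
          G.adjMatrix_mulVec_apply x _]
        rw [Finset.sum_const, nsmul_eq_mul, mul_one]
        have h0 : (G.neighborFinset x).card = k := hreg x
        exact_mod_cast h0
      have : (((k : ℝ) • (1 : Matrix (Fin m) (Fin m) ℝ) - A) *ᵥ fun _ => (1:ℝ)) x
          = (k : ℝ) - (A *ᵥ (fun _ => (1 : ℝ))) x := by
        rw [Matrix.sub_mulVec, Matrix.smul_mulVec, Matrix.one_mulVec]
        simp
      rw [Pi.zero_apply, this, h1, sub_self]
  obtain ⟨l0, -, hl00⟩ := Finset.prod_eq_zero_iff.mp hdetk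
  have hl0 : lam l0 = (k : ℝ) := by linarith [sub_eq_zero.mp hl00]
  have huniq : ∀ l, l ≠ l0 → lam l ≠ (k : ℝ) := fun l hl hlk =>
    hl (hlam_inj (hlk.trans hl0.symm))
  have hboundlam : ∀ l, l ≠ l0 → |lam l| ≤ τ := by
    intro l hl
    have h1 : |lam l| ≠ (k : ℝ) := by
      intro habsk
      rcases (abs_eq (le_of_lt hkR)).mp habsk with h | h
      · exact huniq l hl h
      · exact hnegk l h
    obtain ⟨i, hi⟩ := hexist_mu l
    exact hτ.2 ⟨i, by rw [hi]; exact h1, by rw [hi]⟩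
  -- the Perron column is constant
  have hconstcol := perron_const hreg hconn (fun i => V i l0) (by rw [← hl0]; exact hcol l0)
  have hq0 : ∀ i j : Fin m, V i l0 * V j l0 = 1 / m := by
    intro i j
    have hsq : ∀ a : Fin m, V a l0 * V a l0 = V i l0 * V i l0 := fun a => by
      have h : V a l0 = V i l0 := hconstcol a i
      rw [h]
    have h1 : (m : ℝ) * (V i l0 * V i l0) = 1 := by
      have h2 := hcolnorm l0
      rw [Finset.sum_congr rfl (fun a _ => hsq a), Finset.sum_const, Finset.card_univ,
        Fintype.card_fin, nsmul_eq_mul] at h2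
      exact h2
    have h2 : V j l0 = V i l0 := hconstcol j i
    rw [h2]
    field_simp
    linarith
  -- the exponent N
  set Lr : ℝ := Real.log ((m : ℝ) - 1) / Real.log ((k : ℝ) / τ) with hLrdef
  have hlogk : 0 < Real.log ((k : ℝ) / τ) := Real.log_pos ((one_lt_div hτpos).mpr hτltk)
  have hm1R : (1 : ℝ) < (m : ℝ) - 1 := by linarith
  have hLpos : 0 < Lr := div_pos (Real.log_pos hm1R) hlogk
  have hceil_pos : 0 < ⌈Lr⌉ := Int.ceil_pos.mpr hLpos
  set N : ℕ := (⌈Lr⌉).toNat with hNdef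
  have hNc : (N : ℤ) = ⌈Lr⌉ := Int.toNat_of_nonneg (le_of_lt hceil_pos)
  have hN1 : 1 ≤ N := by
    have : (1 : ℤ) ≤ (N : ℤ) := hNc ▸ hceil_pos
    exact_mod_cast this
  have hNL : Lr ≤ (N : ℝ) := by
    have h1 : ((⌈Lr⌉ : ℤ) : ℝ) = (N : ℝ) := by exact_mod_cast hNc.symm
    linarith [Int.le_ceil Lr]
  have hNineq : ((m : ℝ) - 1) * τ ^ N ≤ (k : ℝ) ^ N := by
    have h1 : Real.log ((m : ℝ) - 1) ≤ (N : ℝ) * Real.log ((k : ℝ) / τ) := by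
      rw [hLrdef] at hNL
      rw [div_le_iff₀ hlogk] at hNL
      linarith
    have h2 : Real.log ((m : ℝ) - 1) ≤ Real.log (((k : ℝ) / τ) ^ N) := by
      rw [Real.log_pow]
      exact_mod_cast h1
    have h3 : (m : ℝ) - 1 ≤ ((k : ℝ) / τ) ^ N :=
      (Real.log_le_log_iff (by linarith) (by positivity)).mp h2
    rw [div_pow] at h3
    rw [le_div_iff₀ (by positivity)] at h3
    exact h3
  -- main claim : between any two vertices there is a walk of length ≤ N
  have main : ∀ i j : Fin m, ∃ w : G.Walk i j, w.length ≤ N := by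
    intro i j
    by_contra hno
    push_neg at hno
    have hzero : ∀ n : ℕ, n ≤ N → (A ^ n) i j = 0 := by
      intro n hn
      have hcw : (A ^ n) i j = (Fintype.card {p : G.Walk i j | p.length = n} : ℝ) :=
        G.adjMatrix_pow_apply_eq_card_walk n i j
      rw [hcw]
      norm_cast
      rw [Fintype.card_eq_zero_iff]
      refine ⟨fun wp => ?_⟩
      have h1 := hno wp.1
      have h2 : wp.1.length = n := wp.2
      omega
    have hij : i ≠ j := by
      rintro rfl
      exact absurd (hno SimpleGraph.Walk.nil) (by simp)
    set q : Fin m → ℝ := fun l => V i l * V j l with hqdef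
    have hsumq0 : ∑ l, q l = 0 := hroworth i j hij
    have hql0 : q l0 = 1 / m := hq0 i j
    have hqrest : ∑ l ∈ Finset.univ.erase l0, q l = -(1 / m) := by
      have h1 := Finset.add_sum_erase Finset.univ q (Finset.mem_univ l0)
      rw [hsumq0, hql0] at h1
      linarith
    have hrowi' : ∑ l ∈ Finset.univ.erase l0, V i l * V i l = 1 - 1 / m := by
      have h1 := Finset.add_sum_erase Finset.univ (fun l => V i l * V i l) (Finset.mem_univ l0)
      rw [hrow i] at h1
      have h2 : V i l0 * V i l0 = 1 / m := hq0 i i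
      simp only [h2] at h1
      linarith
    have hrowj' : ∑ l ∈ Finset.univ.erase l0, V j l * V j l = 1 - 1 / m := by
      have h1 := Finset.add_sum_erase Finset.univ (fun l => V j l * V j l) (Finset.mem_univ l0)
      rw [hrow j] at h1
      have h2 : V j l0 * V j l0 = 1 / m := hq0 j j
      simp only [h2] at h1
      linarith
    have hsumabs : ∑ l ∈ Finset.univ.erase l0, |q l| ≤ 1 - 1 / m := by
      have hABS : ∀ l ∈ Finset.univ.erase l0,
          |q l| ≤ (V i l * V i l + V j l * V j l) / 2 := by
        intro l _
        have h1 : |q l| = |V i l| * |V j l| := abs_mul _ _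
        nlinarith [sq_nonneg (|V i l| - |V j l|), abs_mul_abs_self (V i l), abs_mul_abs_self (V j l),
          abs_nonneg (V i l), abs_nonneg (V j l)]
      calc ∑ l ∈ Finset.univ.erase l0, |q l|
          ≤ ∑ l ∈ Finset.univ.erase l0, (V i l * V i l + V j l * V j l) / 2 :=
            Finset.sum_le_sum hABS
        _ = ((∑ l ∈ Finset.univ.erase l0, V i l * V i l)
              + ∑ l ∈ Finset.univ.erase l0, V j l * V j l) / 2 := by
            rw [← Finset.sum_div, Finset.sum_add_distrib]
        _ = 1 - 1 / m := by rw [hrowi', hrowj']; ring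
    -- the equality chain at exponent N
    have heq : (k : ℝ) ^ N * (1 / m) + ∑ l ∈ Finset.univ.erase l0, lam l ^ N * q l = 0 := by
      have h1 := Finset.add_sum_erase Finset.univ (fun l => lam l ^ N * q l) (Finset.mem_univ l0)
      have h2 := hent N i j
      rw [hzero N le_rfl] at h2
      rw [← h2] at h1
      simp only [hl0, hql0] at h1
      linarith
    have c1 : (k : ℝ) ^ N * (1 / m) ≤ ∑ l ∈ Finset.univ.erase l0, |lam l| ^ N * |q l| := by
      have h1 : |∑ l ∈ Finset.univ.erase l0, lam l ^ N * q l|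
          ≤ ∑ l ∈ Finset.univ.erase l0, |lam l ^ N * q l| :=
        Finset.abs_sum_le_sum_abs _ _
      have h2 : ∑ l ∈ Finset.univ.erase l0, |lam l ^ N * q l|
          = ∑ l ∈ Finset.univ.erase l0, |lam l| ^ N * |q l| :=
        Finset.sum_congr rfl fun l _ => by rw [abs_mul, abs_pow]
      have h3 : |∑ l ∈ Finset.univ.erase l0, lam l ^ N * q l| = (k : ℝ) ^ N * (1 / m) := by
        have h4 : ∑ l ∈ Finset.univ.erase l0, lam l ^ N * q l = -((k : ℝ) ^ N * (1 / m)) := by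
          linarith
        rw [h4, abs_neg, abs_of_nonneg (by positivity)]
      linarith [h2 ▸ (h3 ▸ h1)]
    have c2 : ∑ l ∈ Finset.univ.erase l0, |lam l| ^ N * |q l|
        ≤ ∑ l ∈ Finset.univ.erase l0, τ ^ N * |q l| := by
      refine Finset.sum_le_sum fun l hl => ?_
      have h1 : |lam l| ^ N ≤ τ ^ N :=
        pow_le_pow_left₀ (abs_nonneg _) (hboundlam l (Finset.mem_erase.mp hl).1) N
      exact mul_le_mul_of_nonneg_right h1 (abs_nonneg _)
    have c3 : ∑ l ∈ Finset.univ.erase l0, τ ^ N * |q l| ≤ τ ^ N * (1 - 1 / m) := by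
      rw [← Finset.mul_sum]
      exact mul_le_mul_of_nonneg_left hsumabs (by positivity)
    have c4 : τ ^ N * (1 - 1 / m) ≤ (k : ℝ) ^ N * (1 / m) := by
      have h3 : (((m : ℝ) - 1) * τ ^ N) * (m : ℝ)⁻¹ ≤ (k : ℝ) ^ N * (m : ℝ)⁻¹ :=
        mul_le_mul_of_nonneg_right hNineq (le_of_lt (inv_pos.mpr hm0))
      have h1 : τ ^ N * (1 - 1 / (m : ℝ)) = (((m : ℝ) - 1) * τ ^ N) * (m : ℝ)⁻¹ := by
        field_simp
      have h2 : (k : ℝ) ^ N * (1 / (m : ℝ)) = (k : ℝ) ^ N * (m : ℝ)⁻¹ := by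
        rw [one_div]
      rw [h1, h2]
      exact h3
    have hE3 : (k : ℝ) ^ N = ((m : ℝ) - 1) * τ ^ N := by
      have h5 : τ ^ N * (1 - 1 / (m : ℝ)) = (k : ℝ) ^ N * (1 / m) :=
        le_antisymm c4 (by linarith)
      have hmne : (m : ℝ) ≠ 0 := ne_of_gt hm0
      field_simp at h5
      linarith
    have hE2 : ∀ l ∈ Finset.univ.erase l0, q l ≠ 0 → |lam l| = τ := by
      have hall : ∑ l ∈ Finset.univ.erase l0, |lam l| ^ N * |q l|
          = ∑ l ∈ Finset.univ.erase l0, τ ^ N * |q l| :=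
        le_antisymm c2 (by linarith)
      have hterm := (Finset.sum_eq_sum_iff_of_le (fun l hl =>
        mul_le_mul_of_nonneg_right
          (pow_le_pow_left₀ (abs_nonneg _) (hboundlam l (Finset.mem_erase.mp hl).1) N)
          (abs_nonneg _))).mp hall
      intro l hl hql
      have h1 : |lam l| ^ N * |q l| = τ ^ N * |q l| := hterm l hl
      have h2 : |q l| > 0 := abs_pos.mpr hql
      have h3 : |lam l| ^ N = τ ^ N := by
        have := mul_right_cancel₀ (ne_of_gt h2) h1
        exact this
      rcases lt_trichotomy (|lam l|) τ with h | h | h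
      · exfalso
        have := pow_lt_pow_left₀ h (abs_nonneg _) (by omega : N ≠ 0)
        linarith
      · exact h
      · exfalso
        have := pow_lt_pow_left₀ h (le_of_lt hτpos) (by omega : N ≠ 0)
        linarith
    have hsupp_even : ∀ n : ℕ, Even n →
        ∑ l ∈ Finset.univ.erase l0, lam l ^ n * q l = τ ^ n * (-(1 / m)) := by
      intro n hn
      rw [← hqrest, Finset.mul_sum]
      refine Finset.sum_congr rfl fun l hl => ?_
      by_cases hql : q l = 0
      · rw [hql]; ring
      · have habsl := hE2 l hl hql
        have h1 : lam l ^ n = τ ^ n := by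
          rw [← hn.pow_abs (lam l), habsl]
        rw [h1]
    rcases Nat.even_or_odd N with hNe | hNo
    · rw [hsupp_even N hNe] at heq
      have hkN : (k : ℝ) ^ N = τ ^ N := by
        have hmne : (m : ℝ) ≠ 0 := ne_of_gt hm0
        field_simp at heq
        linarith
      have : τ ^ N < (k : ℝ) ^ N := pow_lt_pow_left₀ hτltk (le_of_lt hτpos) (by omega)
      linarith
    · by_cases hNone : N = 1
      · -- integrality endgame
        have hE3' : (k : ℝ) = ((m : ℝ) - 1) * τ := by
          have := hE3
          rw [hNone] at this
          simpa using this
        have hdeg : k < m := by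
          have h1 := G.degree_lt_card_verts i
          rw [hreg i, Fintype.card_fin] at h1
          exact h1
        have hkm1 : (k : ℝ) ≤ (m : ℝ) - 1 := by
          have : (k : ℝ) + 1 ≤ (m : ℝ) := by exact_mod_cast hdeg
          linarith
        have hτle1 : τ ≤ 1 := by
          nlinarith
        have hm1ne : (m : ℝ) - 1 ≠ 0 := by linarith
        have hτval : τ = (k : ℝ) / ((m : ℝ) - 1) := by
          field_simp
          linarith
        -- μ i1 is an algebraic integer
        have hint : IsIntegral ℤ (μ i1) := by
          have hcast : (G.adjMatrix ℤ).map (Int.castRingHom ℝ) = A := by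
            ext a b
            by_cases h : G.Adj a b <;>
              simp [SimpleGraph.adjMatrix_apply, Matrix.map_apply, h, hAdef]
          have hcp : A.charpoly = ((G.adjMatrix ℤ).charpoly).map (Int.castRingHom ℝ) := by
            rw [← hcast, Matrix.charpoly_map]
          refine ⟨(G.adjMatrix ℤ).charpoly, (G.adjMatrix ℤ).charpoly_monic, ?_⟩
          rw [Polynomial.eval₂_eq_eval_map]
          have halg : (Int.castRingHom ℝ) = algebraMap ℤ ℝ := rfl
          rw [← halg, ← hcp, hchar, Polynomial.eval_prod]
          refine Finset.prod_eq_zero (Finset.mem_univ i1) ?_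
          simp
        have hint2 : IsIntegral ℤ ((μ i1) ^ 2) := hint.pow 2
        have hτsq : τ ^ 2 = (μ i1) ^ 2 := by rw [← hi1τ, sq_abs]
        set r : ℚ := (k : ℚ) ^ 2 / ((m : ℚ) - 1) ^ 2 with hrdef
        have hmq : ((m : ℚ) - 1 : ℚ) ≠ 0 := by
          have : (3 : ℚ) ≤ (m : ℚ) := by exact_mod_cast hm3
          intro h
          nlinarith
        have hr : ((r : ℚ) : ℝ) = τ ^ 2 := by
          rw [hτval, hrdef]
          push_cast
          rw [div_pow]
        have hri : IsIntegral ℤ r := by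
          have h1 : IsIntegral ℤ ((algebraMap ℚ ℝ) r) := by
            have h2 : (algebraMap ℚ ℝ) r = τ ^ 2 := hr
            rw [h2, hτsq]
            exact hint2
          exact (isIntegral_algebraMap_iff (algebraMap ℚ ℝ).injective).mp h1
        obtain ⟨z, hz⟩ := IsIntegrallyClosed.isIntegral_iff.mp hri
        have hz1 : (z : ℝ) = τ ^ 2 := by
          rw [← hr, ← hz]
          push_cast
          rfl
        have hzpos : 0 < z := by
          have h1 : (0 : ℝ) < (z : ℝ) := by rw [hz1]; positivity
          exact_mod_cast h1
        have hzle : z ≤ 1 := by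
          have h1 : (z : ℝ) ≤ 1 := by rw [hz1]; nlinarith
          exact_mod_cast h1
        have hzeq : z = 1 := le_antisymm hzle hzpos
        have hτ1 : τ = 1 := by
          have h1 : τ ^ 2 = 1 := by rw [← hz1, hzeq]; norm_num
          nlinarith
        have hkmR : (k : ℝ) = (m : ℝ) - 1 := by rw [hE3', hτ1, mul_one]
        have hkm' : k = m - 1 := by
          have h1 : (k : ℝ) = ((m - 1 : ℕ) : ℝ) := by
            rw [hkmR]
            push_cast [Nat.cast_sub (by omega : 1 ≤ m)]
            ring
          exact_mod_cast h1
        have hadj : G.Adj i j := by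
          have hsub : G.neighborFinset i ⊆ Finset.univ.erase i := by
            intro x hx
            exact Finset.mem_erase.mpr
              ⟨(G.ne_of_adj ((G.mem_neighborFinset i x).mp hx)).symm, Finset.mem_univ x⟩
          have hcard : (Finset.univ.erase i).card ≤ (G.neighborFinset i).card := by
            rw [Finset.card_erase_of_mem (Finset.mem_univ i), Finset.card_univ, Fintype.card_fin]
            rw [show (G.neighborFinset i).card = k from hreg i, hkm']
          have hEQ := Finset.eq_of_subset_of_card_le hsub hcard
          have hjmem : j ∈ G.neighborFinset i := by
            rw [hEQ]
            exact Finset.mem_erase.mpr ⟨hij.symm, Finset.mem_univ j⟩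
          exact (G.mem_neighborFinset i j).mp hjmem
        have := hno hadj.toWalk
        rw [SimpleGraph.Walk.length_cons, SimpleGraph.Walk.length_nil] at this
        omega
      · -- N odd, N ≥ 3
        have hevN1 : Even (N - 1) := Nat.Odd.sub_odd hNo odd_one
        have h0 := hzero (N - 1) (by omega)
        have hentN1 := hent (N - 1) i j
        rw [h0] at hentN1
        have hsplit := Finset.add_sum_erase Finset.univ
          (fun l => lam l ^ (N - 1) * q l) (Finset.mem_univ l0)
        rw [hsupp_even (N - 1) hevN1, ← hentN1] at hsplit
        simp only [hl0, hql0] at hsplit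
        have hkN : (k : ℝ) ^ (N - 1) = τ ^ (N - 1) := by
          have hmne : (m : ℝ) ≠ 0 := ne_of_gt hm0
          field_simp at hsplit
          linarith
        have : τ ^ (N - 1) < (k : ℝ) ^ (N - 1) :=
          pow_lt_pow_left₀ hτltk (le_of_lt hτpos) (by omega)
        linarith
  -- conclusion
  constructor
  · intro i j
    obtain ⟨w, hw⟩ := main i j
    refine ⟨w, ?_⟩
    have h1 : (w.length : ℤ) ≤ (N : ℤ) := by exact_mod_cast hw
    rw [hNc] at h1
    exact h1
  · have hed : G.ediam ≤ (N : ℕ∞) := by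
      refine SimpleGraph.ediam_le_of_edist_le fun u v => ?_
      obtain ⟨w, hw⟩ := main u v
      calc G.edist u v ≤ (w.length : ℕ∞) := SimpleGraph.edist_le w
        _ ≤ (N : ℕ∞) := by exact_mod_cast hw
    have hdi : G.diam ≤ N := by
      have h1 := ENat.toNat_le_toNat hed (by simp : (N : ℕ∞) ≠ ⊤)
      simpa [SimpleGraph.diam] using h1
    have h2 : (G.diam : ℤ) ≤ (N : ℤ) := by exact_mod_cast hdi
    rw [hNc] at h2
    exact h2


end Main
end
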